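/- arXiv:2005.11244 — 4 statements merged into one kernel-verified Lean document; each statement's English description precedes it below -/
import Mathlib

section
/- The function S = max_{N'≤n≤N} (N/n)·Ŝ_n is upper semicontinuous on I^{N!}, and with â = a/(N-1)! one has S(x_1,…,x_{N!}) ≤ ∑_{k=1}^{N!} â(x_k) for all (x_1,…,x_{N!}) ∈ I^{N!}, where â is lower semicontinuous and μ-integrable. -/
open MeasureTheory

/-- The multiset of coordinates of a point of `I^m`. -/
def coordMultiset {I : Type*} {m : ℕ} (x : Fin m → I) : Multiset I :=
  Multiset.map x Finset.univ.val

/-- `x ∈ I^{N!}` is an `N!/n`-fold replication of `y ∈ I^n` if the multiset of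
coordinates of `x` equals `N!/n` copies of the multiset of coordinates of `y`. -/
def IsReplication {I : Type*} (N n : ℕ) (x : Fin (Nat.factorial N) → I)
    (y : Fin n → I) : Prop :=
  coordMultiset x = (Nat.factorial N / n) • coordMultiset y

/-- `Ŝ_n(x) = s_n(y)` if `x` is an `N!/n`-fold replication of some `y ∈ I^n`
(well-defined when `s n` is symmetric), and `0` otherwise. -/
noncomputable def Shat {I : Type*} (s : ∀ n : ℕ, (Fin n → I) → ℝ) (N n : ℕ)
    (x : Fin (Nat.factorial N) → I) : ℝ :=
  letI := Classical.propDecidable (∃ y : Fin n → I, IsReplication N n x y)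
  if h : ∃ y : Fin n → I, IsReplication N n x y then s n h.choose else 0

/-- `S = max_{N' ≤ n ≤ N} (N/n)·Ŝ_n` on `I^{N!}`. -/
noncomputable def bigS {I : Type*} (s : ∀ n : ℕ, (Fin n → I) → ℝ) (N' N : ℕ)
    (hNN : N' ≤ N) (x : Fin (Nat.factorial N) → I) : ℝ :=
  (Finset.Icc N' N).sup' (Finset.nonempty_Icc.mpr hNN)
    (fun n => ((N : ℝ) / (n : ℝ)) * Shat s N n x)

theorem exists_comp_perm_of_perm {α : Type*} : ∀ {n : ℕ} (u v : Fin n → α),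
    (List.ofFn u).Perm (List.ofFn v) → ∃ σ : Equiv.Perm (Fin n), u ∘ σ = v := by
  intro n
  induction n with
  | zero => exact fun u v _ => ⟨Equiv.refl _, funext fun i => i.elim0⟩
  | succ n ih =>
    intro u v h
    have hv0 : v 0 ∈ List.ofFn u := h.symm.subset (by
      rw [List.mem_ofFn]; exact ⟨0, rfl⟩)
    rw [List.mem_ofFn] at hv0
    obtain ⟨j, hj⟩ := hv0
    set u' : Fin (n + 1) → α := u ∘ Equiv.swap 0 j with hu'
    have h0 : u' 0 = v 0 := by simp [hu', Equiv.swap_apply_left, hj]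
    have hperm : (List.ofFn u').Perm (List.ofFn v) :=
      (Equiv.Perm.ofFn_comp_perm (Equiv.swap 0 j) u).trans h
    rw [List.ofFn_succ (f := u'), List.ofFn_succ (f := v), h0] at hperm
    have htail := hperm.cons_inv
    obtain ⟨σ', hσ'⟩ := ih _ _ htail
    refine ⟨(Equiv.Perm.decomposeFin.symm (0, σ')).trans (Equiv.swap 0 j), ?_⟩
    funext k
    refine Fin.cases ?_ (fun i => ?_) k
    · simpa [Equiv.Perm.decomposeFin_symm_apply_zero, hu'] using h0
    · have := congrFun hσ' i
      simp only [Function.comp_apply] at this ⊢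
      simp only [Equiv.trans_apply, Equiv.Perm.decomposeFin_symm_apply_succ,
        Equiv.swap_apply_left]
      simpa [hu'] using this

theorem coordMultiset_eq_list {α : Type*} {n : ℕ} (u : Fin n → α) :
    coordMultiset u = (List.ofFn u : Multiset α) := by
  simp [coordMultiset, Fin.univ_val_map]

theorem exists_comp_perm_of_coordMultiset_eq {α : Type*} {n : ℕ} {u v : Fin n → α}
    (h : coordMultiset u = coordMultiset v) : ∃ σ : Equiv.Perm (Fin n), u ∘ σ = v := by
  apply exists_comp_perm_of_perm
  rwa [coordMultiset_eq_list, coordMultiset_eq_list, Multiset.coe_eq_coe] at h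

theorem multiset_nsmul_cancel {α : Type*} {m : ℕ} (hm : m ≠ 0) {s t : Multiset α}
    (h : m • s = m • t) : s = t := by
  classical
  ext b
  have := congrArg (Multiset.count b) h
  rw [Multiset.count_nsmul, Multiset.count_nsmul] at this
  exact Nat.eq_of_mul_eq_mul_left (Nat.pos_of_ne_zero hm) this

theorem map_univ_val_equiv {α β : Type*} [Fintype α] [Fintype β] (e : α ≃ β) :
    Multiset.map e Finset.univ.val = Finset.univ.val := by
  have := congrArg Finset.val (Finset.map_univ_equiv e)
  rwa [Finset.map_val] at this

theorem map_snd_univ_val (m n : ℕ) :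
    Multiset.map Prod.snd (Finset.univ.val : Multiset (Fin m × Fin n))
      = m • (Finset.univ.val : Multiset (Fin n)) := by
  ext c
  rw [Multiset.count_map (Prod.snd : Fin m × Fin n → Fin n)]
  rw [Multiset.count_nsmul]
  rw [Multiset.count_eq_one_of_mem (Finset.univ : Finset (Fin n)).nodup
    (Finset.mem_val.mpr (Finset.mem_univ c))]
  have h1 : Multiset.filter (fun a => c = Prod.snd a)
        (Finset.univ.val : Multiset (Fin m × Fin n))
      = (Finset.filter (fun a => c = Prod.snd a) (Finset.univ : Finset (Fin m × Fin n))).val := by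
    rw [Finset.filter_val]
  rw [h1]
  have h2 : Finset.filter (fun a => c = Prod.snd a) (Finset.univ : Finset (Fin m × Fin n))
      = (Finset.univ : Finset (Fin m)) ×ˢ ({c} : Finset (Fin n)) := by
    ext p
    simp only [Finset.mem_filter, Finset.mem_univ, true_and, Finset.mem_product,
      Finset.mem_singleton]
    exact eq_comm
  rw [h2, ← Finset.card_def, Finset.card_product]
  simp

theorem coordMultiset_comp {α : Type*} {M n m : ℕ} (f : Fin M → Fin n)
    (hf : Multiset.map f Finset.univ.val = m • Finset.univ.val) (z : Fin n → α) :
    coordMultiset (z ∘ f) = m • coordMultiset z := by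
  unfold coordMultiset
  rw [← Multiset.map_map, hf, Multiset.map_nsmul]

theorem exists_balanced_decomp {α : Type*} {N n : ℕ} (hdvd : n ∣ Nat.factorial N)
    {x : Fin (Nat.factorial N) → α} {y : Fin n → α} (h : IsReplication N n x y) :
    ∃ f : Fin (Nat.factorial N) → Fin n,
      (Multiset.map f Finset.univ.val = (Nat.factorial N / n) • Finset.univ.val)
        ∧ x = y ∘ f := by
  set m := Nat.factorial N / n with hm
  have hmn : Nat.factorial N = m * n := (Nat.div_mul_cancel hdvd).symm
  let e : Fin (Nat.factorial N) ≃ Fin m × Fin n := (finCongr hmn).trans finProdFinEquiv.symm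
  let f₀ : Fin (Nat.factorial N) → Fin n := Prod.snd ∘ e
  have hbal₀ : Multiset.map f₀ Finset.univ.val = m • Finset.univ.val := by
    show Multiset.map (Prod.snd ∘ e) Finset.univ.val = _
    rw [← Multiset.map_map, map_univ_val_equiv e, map_snd_univ_val]
  have hcm : coordMultiset (y ∘ f₀) = coordMultiset x := by
    rw [coordMultiset_comp f₀ hbal₀, h]
  obtain ⟨σ, hσ⟩ := exists_comp_perm_of_coordMultiset_eq hcm
  refine ⟨f₀ ∘ σ, ?_, ?_⟩
  · show Multiset.map (f₀ ∘ σ) Finset.univ.val = _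
    rw [← Multiset.map_map, map_univ_val_equiv σ, hbal₀]
  · rw [← hσ]; rfl

theorem balanced_surjective {M n m : ℕ} (hm : 0 < m) {f : Fin M → Fin n}
    (hf : Multiset.map f Finset.univ.val = m • Finset.univ.val) :
    Function.Surjective f := by
  intro c
  have hmem : c ∈ Multiset.map f Finset.univ.val := by
    rw [hf]
    exact Multiset.mem_nsmul.mpr ⟨Nat.pos_iff_ne_zero.mp hm, Finset.mem_val.mpr (Finset.mem_univ c)⟩
  obtain ⟨i, _, hi⟩ := Multiset.mem_map.mp hmem
  exact ⟨i, hi⟩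

theorem shat_eq {I : Type*} {s : ∀ n : ℕ, (Fin n → I) → ℝ} {N n : ℕ}
    (hsym : ∀ σ : Equiv.Perm (Fin n), ∀ z : Fin n → I, s n (z ∘ σ) = s n z)
    (hm : Nat.factorial N / n ≠ 0)
    {x : Fin (Nat.factorial N) → I} {y : Fin n → I} (hy : IsReplication N n x y) :
    Shat s N n x = s n y := by
  have hex : ∃ y : Fin n → I, IsReplication N n x y := ⟨y, hy⟩
  have hch : IsReplication N n x hex.choose := hex.choose_spec
  have hcm : coordMultiset hex.choose = coordMultiset y :=
    multiset_nsmul_cancel hm (hch.symm.trans hy)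
  obtain ⟨σ, hσ⟩ := exists_comp_perm_of_coordMultiset_eq hcm
  unfold Shat
  rw [dif_pos hex, ← hσ, hsym]

theorem my_usc_max {α : Type*} [TopologicalSpace α] {f g : α → ℝ}
    (hf : UpperSemicontinuous f) (hg : UpperSemicontinuous g) :
    UpperSemicontinuous (fun x => max (f x) (g x)) := by
  intro x y hy
  simp only [max_lt_iff] at hy
  filter_upwards [hf x y hy.1, hg x y hy.2] with z h1 h2
  simp [max_lt_iff, h1, h2]

theorem my_usc_const_mul {α : Type*} [TopologicalSpace α] {f : α → ℝ} {c : ℝ}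
    (hc : 0 ≤ c) (hf : UpperSemicontinuous f) :
    UpperSemicontinuous (fun x => c * f x) := by
  rcases eq_or_lt_of_le hc with hc0 | hc0
  · intro x y hy
    have hy' : (0:ℝ) < y := by rw [← hc0] at hy; simpa using hy
    filter_upwards with z
    rw [← hc0]; simpa using hy'
  · intro x y hy
    have h1 : f x < y / c := (lt_div_iff₀' hc0).mpr hy
    filter_upwards [hf x _ h1] with z hz
    calc c * f z < c * (y / c) := by exact (mul_lt_mul_iff_right₀ hc0).mpr hz
    _ = y := by field_simp

theorem my_usc_sup' {α ι : Type*} [TopologicalSpace α] (t : Finset ι) (ht : t.Nonempty)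
    (F : ι → α → ℝ) (hF : ∀ i ∈ t, UpperSemicontinuous (F i)) :
    UpperSemicontinuous (fun x => t.sup' ht fun i => F i x) := by
  revert hF
  induction ht using Finset.Nonempty.cons_induction with
  | singleton a =>
    intro hF
    simpa using hF a (Finset.mem_singleton_self a)
  | cons a s h hs ih =>
    intro hF
    have h1 : ∀ i ∈ s, UpperSemicontinuous (F i) :=
      fun i hi => hF i (Finset.mem_cons_of_mem hi)
    have h2 := my_usc_max (hF a (Finset.mem_cons_self a s)) (ih h1)
    have h3 : (fun x => (Finset.cons a s h).sup' (Finset.cons_nonempty h) fun i => F i x)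
        = fun x => max (F a x) (s.sup' hs fun i => F i x) := by
      funext x
      rw [Finset.sup'_cons hs]
    rw [h3]
    exact h2

theorem shat_nonneg {I : Type*} {s : ∀ n : ℕ, (Fin n → I) → ℝ} {N n : ℕ}
    (hnonneg : ∀ z : Fin n → I, 0 ≤ s n z) (x : Fin (Nat.factorial N) → I) :
    0 ≤ Shat s N n x := by
  unfold Shat
  split
  · exact hnonneg _
  · exact le_refl 0

theorem shat_usc {I : Type*} [TopologicalSpace I] [T2Space I]
    {s : ∀ n : ℕ, (Fin n → I) → ℝ} {N n : ℕ} (hn : 0 < n) (hnN : n ≤ N)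
    (hnonneg : ∀ z : Fin n → I, 0 ≤ s n z) (husc : UpperSemicontinuous (s n))
    (hsym : ∀ σ : Equiv.Perm (Fin n), ∀ z : Fin n → I, s n (z ∘ σ) = s n z) :
    UpperSemicontinuous (Shat s N n) := by
  have hdvd : n ∣ Nat.factorial N := Nat.dvd_factorial hn hnN
  have hm : 0 < Nat.factorial N / n :=
    Nat.div_pos (le_trans hnN (Nat.self_le_factorial N)) hn
  rw [upperSemicontinuous_iff_isClosed_preimage]
  intro c
  rcases le_or_gt c 0 with hc | hc
  · have : Shat s N n ⁻¹' Set.Ici c = Set.univ := by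
      ext x
      simp only [Set.mem_preimage, Set.mem_Ici, Set.mem_univ, iff_true]
      exact le_trans hc (shat_nonneg hnonneg x)
    rw [this]; exact isClosed_univ
  · have hset : Shat s N n ⁻¹' Set.Ici c =
        ⋃ f : Fin (Nat.factorial N) → Fin n, ⋃ g : Fin n → Fin (Nat.factorial N),
          {x | (Multiset.map f Finset.univ.val = (Nat.factorial N / n) • Finset.univ.val)
            ∧ f ∘ g = id ∧ (∀ i, x i = x (g (f i))) ∧ c ≤ s n (x ∘ g)} := by
      ext x
      simp only [Set.mem_preimage, Set.mem_Ici, Set.mem_iUnion, Set.mem_setOf_eq]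
      constructor
      · intro hx
        have hex : ∃ y : Fin n → I, IsReplication N n x y := by
          by_contra hne
          have : Shat s N n x = 0 := by unfold Shat; rw [dif_neg hne]
          rw [this] at hx; exact absurd hx (not_le.mpr hc)
        obtain ⟨y, hy⟩ := hex
        obtain ⟨f, hbal, hxf⟩ := exists_balanced_decomp hdvd hy
        have hsurj := balanced_surjective hm hbal
        choose g hg using hsurj
        have hfg : f ∘ g = id := funext hg
        have hxg : x ∘ g = y := by
          funext k
          simp only [Function.comp_apply, hxf, hg]
        refine ⟨f, g, hbal, hfg, fun i => ?_, ?_⟩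
        · show x i = x (g (f i))
          rw [hxf]; simp only [Function.comp_apply, hg]
        · rw [hxg, ← shat_eq hsym (Nat.pos_iff_ne_zero.mp hm) hy]
          exact hx
      · rintro ⟨f, g, hbal, hfg, hfix, hcle⟩
        have hxf : x = (x ∘ g) ∘ f := by
          funext i
          exact hfix i
        have hrep : IsReplication N n x (x ∘ g) := by
          unfold IsReplication
          rw [show coordMultiset x = coordMultiset ((x ∘ g) ∘ f) from congrArg _ hxf]
          exact coordMultiset_comp f hbal (x ∘ g)
        rw [shat_eq hsym (Nat.pos_iff_ne_zero.mp hm) hrep]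
        exact hcle
    rw [hset]
    apply isClosed_iUnion_of_finite; intro f
    apply isClosed_iUnion_of_finite; intro g
    by_cases hfg : (Multiset.map f Finset.univ.val
        = (Nat.factorial N / n) • Finset.univ.val) ∧ f ∘ g = id
    · have : {x : Fin (Nat.factorial N) → I |
          (Multiset.map f Finset.univ.val = (Nat.factorial N / n) • Finset.univ.val)
            ∧ f ∘ g = id ∧ (∀ i, x i = x (g (f i))) ∧ c ≤ s n (x ∘ g)}
          = (⋂ i, {x : Fin (Nat.factorial N) → I | x i = x (g (f i))})
            ∩ ((fun x : Fin (Nat.factorial N) → I => x ∘ g) ⁻¹' (s n ⁻¹' Set.Ici c)) := by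
        ext x
        simp [hfg.1, hfg.2, Set.mem_iInter, and_comm]
      rw [this]
      apply IsClosed.inter
      · exact isClosed_iInter fun i =>
          isClosed_eq (continuous_apply i) (continuous_apply (g (f i)))
      · exact (husc.isClosed_preimage c).preimage
          (continuous_pi fun i => continuous_apply (g i))
    · have : {x : Fin (Nat.factorial N) → I |
          (Multiset.map f Finset.univ.val = (Nat.factorial N / n) • Finset.univ.val)
            ∧ f ∘ g = id ∧ (∀ i, x i = x (g (f i))) ∧ c ≤ s n (x ∘ g)} = ∅ := by
        ext x
        simp only [Set.mem_setOf_eq, Set.mem_empty_iff_false, iff_false]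
        intro h
        exact hfg ⟨h.1, h.2.1⟩
      rw [this]; exact isClosed_empty

theorem my_lsc_div_const {α : Type*} [TopologicalSpace α] {f : α → ℝ} {c : ℝ} (hc : 0 < c)
    (hf : LowerSemicontinuous f) : LowerSemicontinuous (fun x => f x / c) := by
  intro x y hy
  have h1 : y * c < f x := (lt_div_iff₀ hc).mp hy
  filter_upwards [hf x _ h1] with z hz
  exact (lt_div_iff₀ hc).mpr hz

theorem sum_coord_eq {I : Type*} {N n : ℕ} (a : I → ℝ)
    {x : Fin (Nat.factorial N) → I} {y : Fin n → I} (hy : IsReplication N n x y) :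
    ∑ k, a (x k) = (Nat.factorial N / n : ℕ) * ∑ k, a (y k) := by
  have h1 : ∀ {p : ℕ} (z : Fin p → I),
      ∑ k, a (z k) = (Multiset.map a (coordMultiset z)).sum := by
    intro p z
    rw [Finset.sum, coordMultiset, Multiset.map_map]
    rfl
  rw [h1 x, h1 y, hy, Multiset.map_nsmul, Multiset.sum_nsmul, nsmul_eq_mul]

theorem shat_term_bound {I : Type*} {s : ∀ n : ℕ, (Fin n → I) → ℝ} {N n : ℕ}
    (hn : 0 < n) (hnN : n ≤ N) (hN : 0 < N)
    (hsym : ∀ σ : Equiv.Perm (Fin n), ∀ z : Fin n → I, s n (z ∘ σ) = s n z)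
    (a : I → ℝ) (ha_nonneg : ∀ i, 0 ≤ a i)
    (hsb : ∀ y : Fin n → I, s n y ≤ ∑ k, a (y k))
    (x : Fin (Nat.factorial N) → I) :
    ((N : ℝ) / (n : ℝ)) * Shat s N n x ≤ ∑ k, a (x k) / (Nat.factorial (N - 1) : ℝ) := by
  have hfacpos : (0:ℝ) < (Nat.factorial (N-1) : ℝ) := by
    exact_mod_cast Nat.factorial_pos (N-1)
  have hrhs_nonneg : (0:ℝ) ≤ ∑ k, a (x k) / (Nat.factorial (N - 1) : ℝ) :=
    Finset.sum_nonneg fun k _ => div_nonneg (ha_nonneg _) hfacpos.le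
  have hdvd : n ∣ Nat.factorial N := Nat.dvd_factorial hn hnN
  have hm : 0 < Nat.factorial N / n :=
    Nat.div_pos (le_trans hnN (Nat.self_le_factorial N)) hn
  by_cases hex : ∃ y : Fin n → I, IsReplication N n x y
  · obtain ⟨y, hy⟩ := hex
    rw [shat_eq hsym (Nat.pos_iff_ne_zero.mp hm) hy]
    set m := Nat.factorial N / n with hmdef
    have hsum : ∑ k, a (x k) = (m : ℝ) * ∑ k, a (y k) := sum_coord_eq a hy
    have hT : (0:ℝ) ≤ ∑ k, a (y k) := Finset.sum_nonneg fun k _ => ha_nonneg _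
    have hkey : ((N : ℝ) / (n : ℝ)) = (m : ℝ) / (Nat.factorial (N-1) : ℝ) := by
      rw [div_eq_div_iff (by exact_mod_cast hn.ne' : (n:ℝ) ≠ 0) hfacpos.ne']
      have h1 : N * Nat.factorial (N - 1) = Nat.factorial N := Nat.mul_factorial_pred hN.ne'
      have h2 : m * n = Nat.factorial N := Nat.div_mul_cancel hdvd
      rw [show ((m:ℝ) * n = ((m * n : ℕ) : ℝ)) by push_cast; ring, h2, ← h1]
      push_cast; ring
    calc ((N : ℝ) / (n : ℝ)) * s n y
        ≤ ((N : ℝ) / (n : ℝ)) * ∑ k, a (y k) :=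
          mul_le_mul_of_nonneg_left (hsb y) (div_nonneg (Nat.cast_nonneg N) (Nat.cast_nonneg n))
      _ = (m : ℝ) / (Nat.factorial (N-1) : ℝ) * ∑ k, a (y k) := by rw [hkey]
      _ = (∑ k, a (x k)) / (Nat.factorial (N-1) : ℝ) := by rw [hsum]; ring
      _ = ∑ k, a (x k) / (Nat.factorial (N - 1) : ℝ) := by rw [Finset.sum_div]
  · have : Shat s N n x = 0 := by unfold Shat; rw [dif_neg hex]
    rw [this, mul_zero]
    exact hrhs_nonneg

/-- **Lemma 1.**  If each `s_n` is nonnegative, upper semicontinuous, symmetric, and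
dominated by `∑_k a(x_k)` for a nonnegative lower semicontinuous `a ∈ L¹(μ)`, then
`S` is upper semicontinuous and, with `â = a/(N-1)!`, one has
`S(x) ≤ ∑_{k=1}^{N!} â(x_k)`, where `â` is lower semicontinuous and `μ`-integrable. -/
theorem bigS_usc_and_bounded
    {I : Type*} [TopologicalSpace I] [PolishSpace I] [MeasurableSpace I] [BorelSpace I]
    (μ : Measure I) [IsFiniteMeasure μ]
    (N' N : ℕ) (hN' : 2 ≤ N') (hNN : N' ≤ N)
    (s : ∀ n : ℕ, (Fin n → I) → ℝ)
    (hs_nonneg : ∀ n ∈ Finset.Icc N' N, ∀ x : Fin n → I, 0 ≤ s n x)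
    (hs_usc : ∀ n ∈ Finset.Icc N' N, UpperSemicontinuous (s n))
    (hs_symm : ∀ n ∈ Finset.Icc N' N, ∀ σ : Equiv.Perm (Fin n), ∀ x : Fin n → I,
      s n (x ∘ σ) = s n x)
    (a : I → ℝ) (ha_nonneg : ∀ i, 0 ≤ a i) (ha_lsc : LowerSemicontinuous a)
    (ha_int : Integrable a μ)
    (hs_bound : ∀ n ∈ Finset.Icc N' N, ∀ x : Fin n → I, s n x ≤ ∑ k, a (x k)) :
    UpperSemicontinuous (bigS s N' N hNN) ∧
    LowerSemicontinuous (fun i => a i / (Nat.factorial (N - 1) : ℝ)) ∧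
    Integrable (fun i => a i / (Nat.factorial (N - 1) : ℝ)) μ ∧
    (∀ x : Fin (Nat.factorial N) → I,
      bigS s N' N hNN x ≤ ∑ k, a (x k) / (Nat.factorial (N - 1) : ℝ)) := by
  have hN : 0 < N := lt_of_lt_of_le (by norm_num) (le_trans hN' hNN)
  have hfacpos : (0:ℝ) < (Nat.factorial (N-1) : ℝ) := by
    exact_mod_cast Nat.factorial_pos (N-1)
  refine ⟨?_, my_lsc_div_const hfacpos ha_lsc, ha_int.div_const _, ?_⟩
  · apply my_usc_sup'
    intro n hn
    obtain ⟨h1, h2⟩ := Finset.mem_Icc.mp hn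
    have hn0 : 0 < n := lt_of_lt_of_le (by norm_num) (le_trans hN' h1)
    exact my_usc_const_mul (div_nonneg (Nat.cast_nonneg N) (Nat.cast_nonneg n))
      (shat_usc hn0 h2 (hs_nonneg n hn) (hs_usc n hn) (hs_symm n hn))
  · intro x
    apply Finset.sup'_le
    intro n hn
    obtain ⟨h1, h2⟩ := Finset.mem_Icc.mp hn
    have hn0 : 0 < n := lt_of_lt_of_le (by norm_num) (le_trans hN' h1)
    exact shat_term_bound hn0 h2 hN (hs_symm n hn) a ha_nonneg (hs_bound n hn) x
end

section
/- There exists a partition {J_α}_{α∈A} of I^n such that the index set A is finite, each component J_α is a Borel subset of I^n, and no two distinct elements of the same component J_α lie in the same orbit of the coordinate-permutation action of the symmetric group S_n on I^n (equivalently, the quotient map to I^n modulo coordinate permutations is injective on each J_α). -/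
open Metric

namespace PartAux
variable {I : Type*} [MetricSpace I]

noncomputable def least (k : ℕ) (x : I) : I :=
  (IsWellFounded.wf (r := (WellOrderingRel : I → I → Prop))).min
    {p | dist x p < (1/2 : ℝ)^k} ⟨x, by simp⟩

lemma least_mem (k : ℕ) (x : I) : dist x (least k x) < (1/2 : ℝ)^k :=
  (IsWellFounded.wf (r := (WellOrderingRel : I → I → Prop))).min_mem
    {p | dist x p < (1/2 : ℝ)^k} ⟨x, by simp⟩

lemma least_min (k : ℕ) (x p : I) (hp : dist x p < (1/2 : ℝ)^k) :
    ¬ WellOrderingRel p (least k x) :=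
  (IsWellFounded.wf (r := (WellOrderingRel : I → I → Prop))).not_lt_min
    {p | dist x p < (1/2 : ℝ)^k} hp

noncomputable def DD (k n : ℕ) (p : I) : Set I :=
  {y | ∃ x : I, (least k x = p ∧ (∀ m, m < n → ∀ q : I, x ∉ DD k m q) ∧
      dist x p ≤ (1/2 : ℝ)^k - 3*(1/2 : ℝ)^n) ∧ dist y x < (1/2 : ℝ)^(n+3)}
termination_by n

lemma mem_DD_iff (k n : ℕ) (p y : I) :
    y ∈ DD k n p ↔ ∃ x : I, (least k x = p ∧ (∀ m, m < n → ∀ q : I, x ∉ DD k m q) ∧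
      dist x p ≤ (1/2 : ℝ)^k - 3*(1/2 : ℝ)^n) ∧ dist y x < (1/2 : ℝ)^(n+3) := by
  rw [DD]; rfl

lemma isOpen_DD (k n : ℕ) (p : I) : IsOpen (DD k n p) := by
  have : DD k n p = ⋃ (x : I) (_ : least k x = p ∧ (∀ m, m < n → ∀ q : I, x ∉ DD k m q) ∧
      dist x p ≤ (1/2 : ℝ)^k - 3*(1/2 : ℝ)^n), ball x ((1/2 : ℝ)^(n+3)) := by
    ext y
    rw [mem_DD_iff]
    simp only [Set.mem_iUnion, mem_ball]
    tauto
  rw [this]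
  exact isOpen_iUnion fun x => isOpen_iUnion fun _ => isOpen_ball

lemma DD_subset_ball (k n : ℕ) (p : I) : DD k n p ⊆ ball p ((1/2 : ℝ)^k) := by
  intro y hy
  rw [mem_DD_iff] at hy
  obtain ⟨x, ⟨-, -, hxp⟩, hyx⟩ := hy
  have h1 : (1/2 : ℝ)^(n+3) < 3*(1/2 : ℝ)^n := by
    have : (0:ℝ) < (1/2:ℝ)^n := by positivity
    rw [pow_add]; nlinarith
  have := dist_triangle y x p
  simp only [mem_ball]
  nlinarith [dist_nonneg (x := y) (y := x)]

lemma DD_disj_aux (k n : ℕ) (p q a : I) (hpq : WellOrderingRel p q)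
    (ha : a ∈ DD k n p) (hb : a ∈ DD k n q) : False := by
  rw [mem_DD_iff] at ha hb
  obtain ⟨x, ⟨hxl, -, hxp⟩, hax⟩ := ha
  obtain ⟨y, ⟨hyl, -, -⟩, hay⟩ := hb
  have hyp : ¬ dist y p < (1/2:ℝ)^k := by
    intro h
    exact least_min k y p h (hyl ▸ hpq)
  push_neg at hyp
  have h3 : (3:ℝ)*(1/2:ℝ)^n ≤ dist x y := by
    have := dist_triangle y p x
    have := dist_triangle y x p
    have hpx : dist p x = dist x p := dist_comm p x
    nlinarith [dist_comm y x ▸ dist_triangle y p x, dist_triangle p x y, dist_comm x y, dist_comm p y]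
  have hxy : dist x y ≤ dist x a + dist a y := dist_triangle x a y
  have hpow : (1/2 : ℝ)^(n+3) = (1/2:ℝ)^n * (1/8) := by rw [pow_add]; norm_num
  have hpos : (0:ℝ) < (1/2:ℝ)^n := by positivity
  rw [dist_comm x a] at hxy
  linarith

lemma DD_disjoint (k n : ℕ) (p q a : I) (ha : a ∈ DD k n p) (hb : a ∈ DD k n q) : p = q := by
  rcases trichotomous_of (WellOrderingRel : I → I → Prop) p q with h | h | h
  · exact absurd (DD_disj_aux k n p q a h ha hb) not_false
  · exact h
  · exact absurd (DD_disj_aux k n q p a h hb ha) not_false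

lemma DD_cover (k : ℕ) (x : I) : ∃ n p, x ∈ DD k n p := by
  by_contra h
  push_neg at h
  set p := least k x with hp
  have hd : dist x p < (1/2:ℝ)^k := least_mem k x
  obtain ⟨n, hn⟩ : ∃ n : ℕ, 3*(1/2:ℝ)^n ≤ (1/2:ℝ)^k - dist x p := by
    obtain ⟨n, hn⟩ := exists_pow_lt_of_lt_one (x := ((1/2:ℝ)^k - dist x p)/3) (y := (1/2:ℝ))
      (by linarith) (by norm_num)
    exact ⟨n, by linarith⟩
  exact h n p ((mem_DD_iff k n p x).2 ⟨x, ⟨hp.symm, fun m _ q => h m q, by linarith⟩, by simp⟩)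

lemma DD_sep (a b : I) (hab : a ≠ b) : ∃ (k n : ℕ) (p : I), a ∈ DD k n p ∧ b ∉ DD k n p := by
  have hd : 0 < dist a b := dist_pos.2 hab
  obtain ⟨k, hk⟩ : ∃ k : ℕ, (1/2:ℝ)^k < dist a b / 2 :=
    exists_pow_lt_of_lt_one (by linarith) (by norm_num)
  obtain ⟨n, p, hp⟩ := DD_cover k a
  refine ⟨k, n, p, hp, fun hb => ?_⟩
  have h1 := DD_subset_ball k n p hp
  have h2 := DD_subset_ball k n p hb
  simp only [mem_ball] at h1 h2
  have := dist_triangle a p b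
  rw [dist_comm p b] at this
  linarith

noncomputable def Df (N : ℕ) (p : I) : Set I := DD N.unpair.1 N.unpair.2 p

lemma isOpen_Df (N : ℕ) (p : I) : IsOpen (Df N p : Set I) := isOpen_DD _ _ _

lemma Df_disjoint {N : ℕ} {p q a : I} (ha : a ∈ Df N p) (hb : a ∈ Df N q) : p = q :=
  DD_disjoint _ _ _ _ _ ha hb

lemma Df_sep {a b : I} (hab : a ≠ b) : ∃ (N : ℕ) (p : I), a ∈ Df N p ∧ b ∉ Df N p := by
  obtain ⟨k, n, p, h1, h2⟩ := DD_sep a b hab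
  exact ⟨Nat.pair k n, p, by simpa [Df, Nat.unpair_pair] using h1,
    by simpa [Df, Nat.unpair_pair] using h2⟩

def UU (N : ℕ) : Set I := ⋃ p : I, Df N p

lemma mem_UU {N : ℕ} {a : I} : a ∈ UU N ↔ ∃ p : I, a ∈ Df N p := Set.mem_iUnion

lemma isOpen_UU (N : ℕ) : IsOpen (UU N : Set I) := isOpen_iUnion fun p => isOpen_Df N p

def phEq (N : ℕ) (a b : I) : Prop :=
  (∃ p : I, a ∈ Df N p ∧ b ∈ Df N p) ∨ (a ∉ UU N ∧ b ∉ UU N)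

def ltAt (N : ℕ) (a b : I) : Prop :=
  (∃ p q : I, WellOrderingRel p q ∧ a ∈ Df N p ∧ b ∈ Df N q) ∨ (a ∈ UU N ∧ b ∉ UU N)

def lt' (a b : I) : Prop := ∃ N : ℕ, (∀ M, M < N → phEq M a b) ∧ ltAt N a b

lemma r_asymm {p q : I} (h1 : WellOrderingRel p q) (h2 : WellOrderingRel q p) : False := by
  have ht : WellOrderingRel p p := _root_.trans h1 h2
  exact (IsWellFounded.wf (r := (WellOrderingRel : I → I → Prop))).asymmetric p p ht ht

lemma phEq_refl (N : ℕ) (a : I) : phEq N a a := by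
  by_cases h : a ∈ UU N
  · obtain ⟨p, hp⟩ := mem_UU.1 h
    exact Or.inl ⟨p, hp, hp⟩
  · exact Or.inr ⟨h, h⟩

lemma phEq_symm {N : ℕ} {a b : I} (h : phEq N a b) : phEq N b a := by
  rcases h with ⟨p, h1, h2⟩ | ⟨h1, h2⟩
  · exact Or.inl ⟨p, h2, h1⟩
  · exact Or.inr ⟨h2, h1⟩

lemma phEq_trans {N : ℕ} {a b c : I} (h1 : phEq N a b) (h2 : phEq N b c) : phEq N a c := by
  rcases h1 with ⟨p, ha, hb⟩ | ⟨ha, hb⟩ <;> rcases h2 with ⟨q, hb', hc⟩ | ⟨hb', hc⟩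
  · exact Or.inl ⟨p, ha, (Df_disjoint hb' hb) ▸ hc⟩
  · exact absurd (mem_UU.2 ⟨p, hb⟩) hb'
  · exact absurd (mem_UU.2 ⟨q, hb'⟩) hb
  · exact Or.inr ⟨ha, hc⟩

lemma phEq_ltAt {N : ℕ} {a b c : I} (h1 : phEq N a b) (h2 : ltAt N b c) : ltAt N a c := by
  rcases h1 with ⟨p, ha, hb⟩ | ⟨ha, hb⟩ <;>
    rcases h2 with ⟨p', q', hr, hb', hc⟩ | ⟨hb', hc⟩
  · have hpp' : p = p' := Df_disjoint hb hb'
    exact Or.inl ⟨p, q', hpp' ▸ hr, ha, hc⟩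
  · exact Or.inr ⟨mem_UU.2 ⟨p, ha⟩, hc⟩
  · exact absurd (mem_UU.2 ⟨p', hb'⟩) hb
  · exact absurd hb' hb

lemma ltAt_phEq {N : ℕ} {a b c : I} (h1 : ltAt N a b) (h2 : phEq N b c) : ltAt N a c := by
  rcases h1 with ⟨p, q, hr, ha, hb⟩ | ⟨ha, hb⟩ <;>
    rcases h2 with ⟨q', hb', hc⟩ | ⟨hb', hc⟩
  · have hqq' : q = q' := Df_disjoint hb hb'
    exact Or.inl ⟨p, q, hr, ha, hqq' ▸ hc⟩
  · exact absurd (mem_UU.2 ⟨q, hb⟩) hb'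
  · exact absurd (mem_UU.2 ⟨q', hb'⟩) hb
  · exact Or.inr ⟨ha, hc⟩

lemma ltAt_trans {N : ℕ} {a b c : I} (h1 : ltAt N a b) (h2 : ltAt N b c) : ltAt N a c := by
  rcases h1 with ⟨p, q, hr, ha, hb⟩ | ⟨ha, hb⟩ <;>
    rcases h2 with ⟨p', q', hr', hb', hc⟩ | ⟨hb', hc⟩
  · have hqp' : q = p' := Df_disjoint hb hb'
    exact Or.inl ⟨p, q', _root_.trans hr (hqp' ▸ hr'), ha, hc⟩
  · exact Or.inr ⟨mem_UU.2 ⟨p, ha⟩, hc⟩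
  · exact absurd (mem_UU.2 ⟨p', hb'⟩) hb
  · exact absurd hb' hb

lemma phEq_not_ltAt {N : ℕ} {a b : I} (h1 : phEq N a b) (h2 : ltAt N a b) : False := by
  rcases h1 with ⟨p, ha, hb⟩ | ⟨ha, hb⟩ <;>
    rcases h2 with ⟨p', q', hr, ha', hb'⟩ | ⟨ha', hb'⟩
  · have h3 : p' = p := Df_disjoint ha' ha
    have h4 : q' = p := Df_disjoint hb' hb
    rw [h3, h4] at hr
    exact r_asymm hr hr
  · exact absurd (mem_UU.2 ⟨p, hb⟩) hb'
  · exact absurd (mem_UU.2 ⟨p', ha'⟩) ha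
  · exact absurd ha' ha

lemma ltAt_asymm {N : ℕ} {a b : I} (h1 : ltAt N a b) (h2 : ltAt N b a) : False := by
  rcases h1 with ⟨p, q, hr, ha, hb⟩ | ⟨ha, hb⟩ <;>
    rcases h2 with ⟨p', q', hr', hb', ha'⟩ | ⟨hb', ha'⟩
  · have h3 : p' = q := Df_disjoint hb' hb
    have h4 : q' = p := Df_disjoint ha' ha
    rw [h3, h4] at hr'
    exact r_asymm hr hr'
  · exact absurd (mem_UU.2 ⟨p, ha⟩) ha'
  · exact absurd (mem_UU.2 ⟨p', hb'⟩) hb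
  · exact absurd ha ha'

lemma lt'_irrefl (a : I) : ¬ lt' a a := by
  rintro ⟨N, -, hlt⟩
  exact phEq_not_ltAt (phEq_refl N a) hlt

lemma lt'_asymm {a b : I} (h1 : lt' a b) (h2 : lt' b a) : False := by
  obtain ⟨N1, e1, l1⟩ := h1
  obtain ⟨N2, e2, l2⟩ := h2
  rcases lt_trichotomy N1 N2 with h | h | h
  · exact phEq_not_ltAt (phEq_symm (e2 N1 h)) l1
  · subst h; exact ltAt_asymm l1 l2
  · exact phEq_not_ltAt (phEq_symm (e1 N2 h)) l2

lemma lt'_trans {a b c : I} (h1 : lt' a b) (h2 : lt' b c) : lt' a c := by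
  obtain ⟨N1, e1, l1⟩ := h1
  obtain ⟨N2, e2, l2⟩ := h2
  rcases lt_trichotomy N1 N2 with h | h | h
  · exact ⟨N1, fun M hM => phEq_trans (e1 M hM) (e2 M (hM.trans h)),
      ltAt_phEq l1 (e2 N1 h)⟩
  · subst h
    exact ⟨N1, fun M hM => phEq_trans (e1 M hM) (e2 M hM), ltAt_trans l1 l2⟩
  · exact ⟨N2, fun M hM => phEq_trans (e1 M (hM.trans h)) (e2 M hM),
      phEq_ltAt (e1 N2 h) l2⟩

lemma lt'_total {a b : I} (hab : a ≠ b) : lt' a b ∨ lt' b a := by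
  classical
  have hex : ∃ N : ℕ, ¬ phEq N a b := by
    obtain ⟨N, p, h1, h2⟩ := Df_sep hab
    refine ⟨N, fun h => ?_⟩
    rcases h with ⟨q, ha, hb⟩ | ⟨ha, hb⟩
    · exact h2 ((Df_disjoint ha h1) ▸ hb)
    · exact ha (mem_UU.2 ⟨p, h1⟩)
  set N0 := Nat.find hex with hN0
  have hmin : ∀ M, M < N0 → phEq M a b := fun M hM => by
    have := Nat.find_min hex hM
    exact not_not.1 this
  have hne : ¬ phEq N0 a b := Nat.find_spec hex
  by_cases haU : a ∈ UU N0 <;> by_cases hbU : b ∈ UU N0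
  · obtain ⟨p, hp⟩ := mem_UU.1 haU
    obtain ⟨q, hq⟩ := mem_UU.1 hbU
    have hpq : p ≠ q := fun h => hne (Or.inl ⟨p, hp, h ▸ hq⟩)
    rcases trichotomous_of (WellOrderingRel : I → I → Prop) p q with h | h | h
    · exact Or.inl ⟨N0, hmin, Or.inl ⟨p, q, h, hp, hq⟩⟩
    · exact absurd h hpq
    · exact Or.inr ⟨N0, fun M hM => phEq_symm (hmin M hM), Or.inl ⟨q, p, h, hq, hp⟩⟩
  · exact Or.inl ⟨N0, hmin, Or.inr ⟨haU, hbU⟩⟩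
  · exact Or.inr ⟨N0, fun M hM => phEq_symm (hmin M hM), Or.inr ⟨hbU, haU⟩⟩
  · exact absurd (Or.inr ⟨haU, hbU⟩) hne

lemma measurableSet_lt' :
    @MeasurableSet (I × I) (borel (I × I)) {z : I × I | lt' z.1 z.2} := by
  letI : MeasurableSpace (I × I) := borel (I × I)
  haveI : BorelSpace (I × I) := ⟨rfl⟩
  have hEq : ∀ N : ℕ, MeasurableSet {z : I × I | phEq N z.1 z.2} := by
    intro N
    have heq : {z : I × I | phEq N z.1 z.2} =
        (⋃ p : I, (Df N p ×ˢ Df N p)) ∪ ((Prod.fst ⁻¹' UU N)ᶜ ∩ (Prod.snd ⁻¹' UU N)ᶜ) := by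
      ext z
      simp only [phEq, Set.mem_setOf_eq, Set.mem_union, Set.mem_iUnion, Set.mem_prod,
        Set.mem_inter_iff, Set.mem_compl_iff, Set.mem_preimage]
    rw [heq]
    exact ((isOpen_iUnion fun p => (isOpen_Df N p).prod (isOpen_Df N p)).measurableSet).union
      ((((isOpen_UU N).preimage continuous_fst).measurableSet.compl).inter
        (((isOpen_UU N).preimage continuous_snd).measurableSet.compl))
  have hLt : ∀ N : ℕ, MeasurableSet {z : I × I | ltAt N z.1 z.2} := by
    intro N
    have heq : {z : I × I | ltAt N z.1 z.2} =
        (⋃ p : I, ⋃ q : I, ⋃ (_ : WellOrderingRel p q), (Df N p ×ˢ Df N q)) ∪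
          ((Prod.fst ⁻¹' UU N) ∩ (Prod.snd ⁻¹' UU N)ᶜ) := by
      ext z
      simp only [ltAt, Set.mem_setOf_eq, Set.mem_union, Set.mem_inter_iff,
        Set.mem_compl_iff, Set.mem_preimage]
      constructor
      · rintro (⟨p, q, hr, h1, h2⟩ | ⟨h1, h2⟩)
        · exact Or.inl (Set.mem_iUnion.2 ⟨p, Set.mem_iUnion.2 ⟨q, Set.mem_iUnion.2 ⟨hr, h1, h2⟩⟩⟩)
        · exact Or.inr ⟨h1, h2⟩
      · rintro (hm | ⟨h1, h2⟩)
        · obtain ⟨p, hm⟩ := Set.mem_iUnion.1 hm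
          obtain ⟨q, hm⟩ := Set.mem_iUnion.1 hm
          obtain ⟨hr, hm⟩ := Set.mem_iUnion.1 hm
          exact Or.inl ⟨p, q, hr, hm.1, hm.2⟩
        · exact Or.inr ⟨h1, h2⟩
    rw [heq]
    exact ((isOpen_iUnion fun p => isOpen_iUnion fun q => isOpen_iUnion fun _ =>
        (isOpen_Df N p).prod (isOpen_Df N q)).measurableSet).union
      ((((isOpen_UU N).preimage continuous_fst).measurableSet).inter
        (((isOpen_UU N).preimage continuous_snd).measurableSet.compl))
  have heq : {z : I × I | lt' z.1 z.2} =
      ⋃ N : ℕ, ((⋂ M : ℕ, ⋂ (_ : M < N), {z : I × I | phEq M z.1 z.2}) ∩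
        {z : I × I | ltAt N z.1 z.2}) := by
    ext z
    simp only [lt', Set.mem_setOf_eq, Set.mem_iUnion, Set.mem_iInter, Set.mem_inter_iff]
  rw [heq]
  exact MeasurableSet.iUnion fun N =>
    (MeasurableSet.iInter fun M => MeasurableSet.iInter fun _ => hEq M).inter (hLt N)

lemma perm_fix {n : ℕ} (x : Fin n → I) (σ : Equiv.Perm (Fin n))
    (h : ∀ i j, lt' (x i) (x j) ↔ lt' (x (σ i)) (x (σ j))) (i : Fin n) : x (σ i) = x i := by
  classical
  have hre : ∀ p : Fin n → Prop, ∀ _ : DecidablePred p,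
      (Finset.univ.filter fun j => p (σ j)).card = (Finset.univ.filter p).card := by
    intro p hp
    exact Finset.card_equiv σ (fun j => by simp)
  have hN : (Finset.univ.filter fun j => lt' (x j) (x (σ i))).card =
      (Finset.univ.filter fun j => lt' (x j) (x i)).card := by
    rw [← hre (fun j => lt' (x j) (x (σ i))) _]
    congr 1
    apply Finset.filter_congr
    intro j _
    first
      | exact (h j i).symm
      | exact eq_iff_iff.2 (h j i).symm
  have hM : (Finset.univ.filter fun j => ¬ lt' (x (σ i)) (x j)).card =
      (Finset.univ.filter fun j => ¬ lt' (x i) (x j)).card := by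
    rw [← hre (fun j => ¬ lt' (x (σ i)) (x j)) _]
    congr 1
    apply Finset.filter_congr
    intro j _
    first
      | exact not_congr (h i j).symm
      | exact eq_iff_iff.2 (not_congr (h i j).symm)
  have hNM : (Finset.univ.filter fun j => lt' (x j) (x i)).card <
      (Finset.univ.filter fun j => ¬ lt' (x i) (x j)).card := by
    apply Finset.card_lt_card
    constructor
    · intro j hj
      simp only [Finset.mem_filter, Finset.mem_univ, true_and] at hj ⊢
      exact fun hc => lt'_asymm hj hc
    · intro hsub
      have := hsub (Finset.mem_filter.2 ⟨Finset.mem_univ i, lt'_irrefl (x i)⟩)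
      simp only [Finset.mem_filter, Finset.mem_univ, true_and] at this
      exact lt'_irrefl (x i) this
  by_contra hne
  rcases lt'_total hne with hA | hB
  · -- lt' (x (σ i)) (x i)
    have hsub : (Finset.univ.filter fun j => ¬ lt' (x (σ i)) (x j)) ⊆
        (Finset.univ.filter fun j => lt' (x j) (x i)) := by
      intro j hj
      simp only [Finset.mem_filter, Finset.mem_univ, true_and] at hj ⊢
      rcases eq_or_ne (x j) (x (σ i)) with he | hne'
      · rw [he]; exact hA
      · rcases lt'_total hne' with h1 | h1
        · exact lt'_trans h1 hA
        · exact absurd h1 hj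
    have := Finset.card_le_card hsub
    omega
  · -- lt' (x i) (x (σ i))
    have hsub : (Finset.univ.filter fun j => ¬ lt' (x i) (x j)) ⊆
        (Finset.univ.filter fun j => lt' (x j) (x (σ i))) := by
      intro j hj
      simp only [Finset.mem_filter, Finset.mem_univ, true_and] at hj ⊢
      rcases eq_or_ne (x j) (x i) with he | hne'
      · rw [he]; exact hB
      · rcases lt'_total hne' with h1 | h1
        · exact lt'_trans h1 hB
        · exact absurd h1 hj
    have := Finset.card_le_card hsub
    omega

end PartAux

/-- **Lemma 2.**  For a metric space `I` and `n ≥ 2` there is a finite partition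
`{J_α}` of `I^n` into Borel sets (with respect to the Borel σ-algebra of the product
topology) such that no two distinct points of the same component lie in the same orbit
of the coordinate-permutation action of `S_n` on `I^n`. -/
theorem exists_finite_borel_partition_injective_on_orbits
    {I : Type*} [MetricSpace I] (n : ℕ) (hn : 2 ≤ n) :
    ∃ (m : ℕ) (J : Fin m → Set (Fin n → I)),
      (∀ x : Fin n → I, ∃! α : Fin m, x ∈ J α) ∧
      (∀ α : Fin m, @MeasurableSet _ (borel (Fin n → I)) (J α)) ∧
      (∀ α : Fin m, ∀ x ∈ J α, ∀ y ∈ J α,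
        (∃ σ : Equiv.Perm (Fin n), y = x ∘ σ) → x = y) := by
  classical
  set P : (Fin n → I) → (Fin n × Fin n → Bool) :=
    fun x ij => decide (PartAux.lt' (x ij.1) (x ij.2)) with hP
  have hcard : Fintype.card (Fin n × Fin n → Bool) = 2 ^ (n * n) := by
    simp [Fintype.card_fun]
  let e : (Fin n × Fin n → Bool) ≃ Fin (2 ^ (n * n)) := Fintype.equivFinOfCardEq hcard
  refine ⟨2 ^ (n * n), fun α => {x | P x = e.symm α}, ?_, ?_, ?_⟩
  · intro x
    refine ⟨e (P x), ?_, ?_⟩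
    · simp only [Set.mem_setOf_eq, Equiv.symm_apply_apply]
    · intro β hβ
      rw [Set.mem_setOf_eq] at hβ
      rw [hβ, Equiv.apply_symm_apply]
  · intro α
    letI mIp : MeasurableSpace (I × I) := borel (I × I)
    haveI : BorelSpace (I × I) := ⟨rfl⟩
    letI mPi : MeasurableSpace (Fin n → I) := borel (Fin n → I)
    haveI : BorelSpace (Fin n → I) := ⟨rfl⟩
    have heq : {x : Fin n → I | P x = e.symm α} =
        ⋂ ij : Fin n × Fin n, {x : Fin n → I | P x ij = e.symm α ij} := by
      ext x
      simp only [Set.mem_setOf_eq, Set.mem_iInter, funext_iff]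
    show MeasurableSet {x : Fin n → I | P x = e.symm α}
    rw [heq]
    refine MeasurableSet.iInter fun ij => ?_
    have hS : MeasurableSet ((fun x : Fin n → I => (x ij.1, x ij.2)) ⁻¹'
        {z : I × I | PartAux.lt' z.1 z.2}) :=
      (((continuous_apply ij.1).prodMk (continuous_apply ij.2)).measurable)
        PartAux.measurableSet_lt'
    cases hb : e.symm α ij with
    | true =>
      have : {x : Fin n → I | P x ij = true} =
          (fun x : Fin n → I => (x ij.1, x ij.2)) ⁻¹' {z : I × I | PartAux.lt' z.1 z.2} := by
        ext x
        simp only [Set.mem_setOf_eq, Set.mem_preimage, hP, decide_eq_true_eq]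
      rw [this]; exact hS
    | false =>
      have : {x : Fin n → I | P x ij = false} =
          ((fun x : Fin n → I => (x ij.1, x ij.2)) ⁻¹'
            {z : I × I | PartAux.lt' z.1 z.2})ᶜ := by
        ext x
        simp only [Set.mem_setOf_eq, Set.mem_compl_iff, Set.mem_preimage, hP,
          decide_eq_false_iff_not]
      rw [this]; exact hS.compl
  · rintro α x hx y hy ⟨σ, hσ⟩
    rw [Set.mem_setOf_eq] at hx hy
    have hPxy : P x = P y := hx.trans hy.symm
    have hiff : ∀ i j : Fin n, PartAux.lt' (x i) (x j) ↔
        PartAux.lt' (x (σ i)) (x (σ j)) := by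
      intro i j
      have := congrFun hPxy (i, j)
      simp only [hP] at this
      have h2 := decide_eq_decide.1 this
      rw [hσ] at h2
      simpa using h2
    have hfix := PartAux.perm_fix x σ hiff
    funext i
    rw [hσ]
    exact (hfix i).symm
end

section
/- The supremum of the total surplus ∑_{n=N'}^N (1/n) ∫_{I^n} s_n dγ_n over all assignments is attained: there exists an assignment (γ_n)_{N'≤n≤N} achieving the supremum. -/
open MeasureTheory

open Topology Filter Set TopologicalSpace BoundedContinuousFunction
open scoped ENNReal NNReal
set_option linter.unusedSectionVars false
set_option linter.unusedVariables false
set_option maxHeartbeats 1000000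

section Riesz

variable {X : Type*} [MetricSpace X] [CompactSpace X]

/-- Test functions for the Riesz content of a compact set. -/
def rTest (K : Compacts X) : Set C(X, ℝ) :=
  {f | (∀ x, 0 ≤ f x) ∧ ∀ x ∈ (K : Set X), 1 ≤ f x}

variable (Λ : C(X, ℝ) → ℝ)

/-- The Riesz content of a compact set. -/
noncomputable def rCont (K : Compacts X) : ℝ := sInf (Λ '' rTest K)

variable (hadd : ∀ f g : C(X, ℝ), Λ (f + g) = Λ f + Λ g)
variable (hsmul : ∀ (c : ℝ) (f : C(X, ℝ)), Λ (c • f) = c * Λ f)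
variable (hpos : ∀ f : C(X, ℝ), (∀ x, 0 ≤ f x) → 0 ≤ Λ f)

lemma rTest_one (K : Compacts X) : (1 : C(X, ℝ)) ∈ rTest K :=
  ⟨fun _ => zero_le_one, fun _ _ => le_refl 1⟩

lemma rTest_nonempty (K : Compacts X) : (Λ '' rTest K).Nonempty :=
  ⟨Λ 1, 1, rTest_one K, rfl⟩

section basic

include hadd hpos in
lemma rMono {f g : C(X, ℝ)} (h : ∀ x, f x ≤ g x) : Λ f ≤ Λ g := by
  have h0 : ∀ x, (0:ℝ) ≤ (g - f) x := fun x => by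
    simpa using sub_nonneg.mpr (h x)
  have := hpos (g - f) h0
  have hg : Λ g = Λ f + Λ (g - f) := by
    rw [← hadd]; congr 1; ext x; simp
  linarith

include hpos in
lemma rBddBelow (K : Compacts X) : BddBelow (Λ '' rTest K) := by
  refine ⟨0, fun b hb => ?_⟩
  rcases hb with ⟨f, hf, rfl⟩
  exact hpos f hf.1

include hpos in
lemma rCont_nonneg (K : Compacts X) : 0 ≤ rCont Λ K :=
  le_csInf (rTest_nonempty Λ K) (by rintro b ⟨f, hf, rfl⟩; exact hpos f hf.1)

include hpos in
lemma rCont_le {K : Compacts X} {f : C(X, ℝ)} (hf : f ∈ rTest K) : rCont Λ K ≤ Λ f :=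
  csInf_le (rBddBelow Λ hpos K) ⟨f, hf, rfl⟩

include hpos in
lemma le_rCont {K : Compacts X} {c : ℝ} (h : ∀ f ∈ rTest K, c ≤ Λ f) : c ≤ rCont Λ K :=
  le_csInf (rTest_nonempty Λ K) (by rintro b ⟨f, hf, rfl⟩; exact h f hf)

include hpos in
lemma rCont_exists_lt (K : Compacts X) {ε : ℝ} (hε : 0 < ε) :
    ∃ f ∈ rTest K, Λ f < rCont Λ K + ε := by
  obtain ⟨b, hb, hlt⟩ := exists_lt_of_csInf_lt (rTest_nonempty Λ K)
    (lt_add_of_pos_right (rCont Λ K) hε)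
  rcases hb with ⟨f, hf, rfl⟩
  exact ⟨f, hf, hlt⟩

include hpos in
lemma rCont_mono {K₁ K₂ : Compacts X} (h : (K₁ : Set X) ⊆ K₂) :
    rCont Λ K₁ ≤ rCont Λ K₂ := by
  apply csInf_le_csInf (rBddBelow Λ hpos K₁) (rTest_nonempty Λ K₂)
  rintro b ⟨f, hf, rfl⟩
  exact ⟨f, ⟨hf.1, fun x hx => hf.2 x (h hx)⟩, rfl⟩

include hadd hpos in
lemma rCont_sup_le (K₁ K₂ : Compacts X) :
    rCont Λ (K₁ ⊔ K₂) ≤ rCont Λ K₁ + rCont Λ K₂ := by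
  refine le_of_forall_pos_le_add fun ε hε => ?_
  obtain ⟨f₁, hf₁, hΛ₁⟩ := rCont_exists_lt Λ hpos K₁ (half_pos hε)
  obtain ⟨f₂, hf₂, hΛ₂⟩ := rCont_exists_lt Λ hpos K₂ (half_pos hε)
  have hmem : (f₁ + f₂) ∈ rTest (K₁ ⊔ K₂) := by
    constructor
    · intro x; have := hf₁.1 x; have := hf₂.1 x
      simp only [ContinuousMap.add_apply]; linarith
    · rintro x (hx | hx)
      · have := hf₁.2 x hx; have := hf₂.1 x
        simp only [ContinuousMap.add_apply]; linarith
      · have := hf₂.2 x hx; have := hf₁.1 x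
        simp only [ContinuousMap.add_apply]; linarith
  calc rCont Λ (K₁ ⊔ K₂) ≤ Λ (f₁ + f₂) := rCont_le Λ hpos hmem
    _ = Λ f₁ + Λ f₂ := hadd _ _
    _ ≤ rCont Λ K₁ + rCont Λ K₂ + ε := by linarith

include hadd hpos in
lemma rCont_sup_disjoint (K₁ K₂ : Compacts X) (hd : Disjoint (K₁ : Set X) K₂) :
    rCont Λ (K₁ ⊔ K₂) = rCont Λ K₁ + rCont Λ K₂ := by
  refine le_antisymm (rCont_sup_le Λ hadd hpos K₁ K₂) ?_
  obtain ⟨g, hg1, hg2, hg01⟩ := exists_continuous_zero_one_of_isClosed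
    K₂.isCompact.isClosed K₁.isCompact.isClosed hd.symm
  refine le_rCont Λ hpos fun f hf => ?_
  have hmem₁ : f * g ∈ rTest K₁ := by
    constructor
    · intro x; exact mul_nonneg (hf.1 x) (hg01 x).1
    · intro x hx
      have : g x = 1 := hg2 hx
      have hfx : 1 ≤ f x := hf.2 x (Or.inl hx)
      simp only [ContinuousMap.mul_apply, this, mul_one]; exact hfx
  have hmem₂ : f * (1 - g) ∈ rTest K₂ := by
    constructor
    · intro x
      have := (hg01 x).2
      exact mul_nonneg (hf.1 x) (by simpa using sub_nonneg.mpr this)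
    · intro x hx
      have : g x = 0 := hg1 hx
      have hfx : 1 ≤ f x := hf.2 x (Or.inr hx)
      simp only [ContinuousMap.mul_apply, ContinuousMap.sub_apply, ContinuousMap.one_apply, this,
        sub_zero, mul_one]
      exact hfx
  have hsum : Λ (f * g) + Λ (f * (1 - g)) = Λ f := by
    rw [← hadd]; congr 1; ext x; simp; ring
  have h₁ := rCont_le Λ hpos hmem₁
  have h₂ := rCont_le Λ hpos hmem₂
  linarith

end basic

/-- The Riesz content as a `Content`. -/
noncomputable def rieszContentR (hadd : ∀ f g : C(X, ℝ), Λ (f + g) = Λ f + Λ g)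
    (hpos : ∀ f : C(X, ℝ), (∀ x, 0 ≤ f x) → 0 ≤ Λ f) : Content X where
  toFun K := (rCont Λ K).toNNReal
  mono' K₁ K₂ h := Real.toNNReal_mono (rCont_mono Λ hpos h)
  sup_disjoint' K₁ K₂ hd _ _ := by
    show (rCont Λ (K₁ ⊔ K₂)).toNNReal = (rCont Λ K₁).toNNReal + (rCont Λ K₂).toNNReal
    rw [rCont_sup_disjoint Λ hadd hpos K₁ K₂ hd,
      Real.toNNReal_add (rCont_nonneg Λ hpos K₁) (rCont_nonneg Λ hpos K₂)]
  sup_le' K₁ K₂ := by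
    show (rCont Λ (K₁ ⊔ K₂)).toNNReal ≤ (rCont Λ K₁).toNNReal + (rCont Λ K₂).toNNReal
    rw [← Real.toNNReal_add (rCont_nonneg Λ hpos K₁) (rCont_nonneg Λ hpos K₂)]
    exact Real.toNNReal_mono (rCont_sup_le Λ hadd hpos K₁ K₂)

section RMeasure

variable [MeasurableSpace X] [BorelSpace X]

/-- The measure associated to the Riesz content. -/
noncomputable def rieszMeasure (hadd : ∀ f g : C(X, ℝ), Λ (f + g) = Λ f + Λ g)
    (hpos : ∀ f : C(X, ℝ), (∀ x, 0 ≤ f x) → 0 ≤ Λ f) : Measure X :=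
  (rieszContentR Λ hadd hpos).measure

include hadd hpos

lemma rieszMeasure_univ_le :
    rieszMeasure Λ hadd hpos univ ≤ ENNReal.ofReal (Λ 1) := by
  rw [rieszMeasure, Content.measure_apply _ MeasurableSet.univ,
    (rieszContentR Λ hadd hpos).outerMeasure_of_isOpen univ isOpen_univ]
  refine le_trans ((rieszContentR Λ hadd hpos).innerContent_le ⟨univ, isOpen_univ⟩
    ⟨univ, isCompact_univ⟩ subset_rfl) ?_
  show ((rCont Λ ⟨univ, isCompact_univ⟩).toNNReal : ℝ≥0∞) ≤ ENNReal.ofReal (Λ 1)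
  exact ENNReal.ofReal_le_ofReal (rCont_le Λ hpos (rTest_one _))

lemma rieszMeasure_finite : IsFiniteMeasure (rieszMeasure Λ hadd hpos) :=
  ⟨lt_of_le_of_lt (rieszMeasure_univ_le Λ hadd hpos) ENNReal.ofReal_lt_top⟩

lemma lam_le_of_tsupport {h : C(X, ℝ)} (h0 : ∀ x, 0 ≤ h x) (h1 : ∀ x, h x ≤ 1)
    {U : Set X} (hU : IsOpen U) (hsupp : tsupport h ⊆ U) :
    ENNReal.ofReal (Λ h) ≤ rieszMeasure Λ hadd hpos U := by
  have hKc : IsCompact (tsupport h) := (isClosed_tsupport (h : X → ℝ)).isCompact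
  have hΛ : Λ h ≤ rCont Λ (⟨tsupport h, hKc⟩ : Compacts X) := by
    refine le_rCont Λ hpos fun f hf => rMono Λ hadd hpos fun x => ?_
    by_cases hx : x ∈ tsupport (h : X → ℝ)
    · exact (h1 x).trans (hf.2 x hx)
    · rw [image_eq_zero_of_notMem_tsupport hx]; exact hf.1 x
  rw [rieszMeasure, Content.measure_apply _ hU.measurableSet,
    (rieszContentR Λ hadd hpos).outerMeasure_of_isOpen U hU]
  refine le_trans ?_ ((rieszContentR Λ hadd hpos).le_innerContent ⟨tsupport h, hKc⟩ ⟨U, hU⟩ hsupp)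
  show ENNReal.ofReal (Λ h) ≤ ((rCont Λ ⟨tsupport h, hKc⟩).toNNReal : ℝ≥0∞)
  exact ENNReal.ofReal_le_ofReal hΛ

include hsmul in
lemma lam_le_integral (f : C(X, ℝ)) (hf : ∀ x, 0 ≤ f x) :
    Λ f ≤ ∫ x, f x ∂(rieszMeasure Λ hadd hpos) := by
  set μ := rieszMeasure Λ hadd hpos with hμdef
  haveI : IsFiniteMeasure μ := rieszMeasure_finite Λ hadd hpos
  set c : ℝ := (μ univ).toReal with hc
  have hc0 : 0 ≤ c := ENNReal.toReal_nonneg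
  set b : ℝ := ‖mkOfCompact f‖ with hb
  have hb0 : 0 ≤ b := norm_nonneg _
  have hfb : ∀ x, f x ≤ b := fun x =>
    (le_abs_self _).trans (by simpa [hb] using (mkOfCompact f).norm_coe_le_norm x)
  have hintf : Integrable f μ := (mkOfCompact f).integrable μ
  have H : ∀ ε : ℝ, 0 < ε → ε ≤ 1 → Λ f ≤ (∫ x, f x ∂μ) + ε * (c + b + 2) := by
    intro ε hε hε1
    set n : ℕ := ⌈(b + 1) / ε⌉₊ with hn
    have hn0 : 0 < n := Nat.ceil_pos.mpr (div_pos (by linarith) hε)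
    have hn0' : (0:ℝ) < n := by exact_mod_cast hn0
    have hnb : b + 1 ≤ n * ε := (div_le_iff₀ hε).mp (Nat.le_ceil _)
    have hnε : (n : ℝ) * ε ≤ b + 1 + ε := by
      have h1 : (n : ℝ) < (b + 1) / ε + 1 :=
        Nat.ceil_lt_add_one (le_of_lt (div_pos (by linarith) hε))
      have h2 : (n : ℝ) * ε ≤ ((b + 1) / ε + 1) * ε := by nlinarith
      calc (n:ℝ) * ε ≤ ((b+1)/ε + 1) * ε := h2
        _ = b + 1 + ε := by field_simp
    set E : Fin n → Set X := fun i => f ⁻¹' (Ico ((i : ℕ) * ε) (((i : ℕ) + 1) * ε)) with hE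
    have hEmeas : ∀ i, MeasurableSet (E i) := fun i =>
      f.continuous.measurable measurableSet_Ico
    have hunique : ∀ (x : X) (i : Fin n), x ∈ E i → (i : ℕ) = ⌊f x / ε⌋₊ := by
      intro x i hx
      rcases hx with ⟨h1, h2⟩
      symm
      rw [Nat.floor_eq_iff (div_nonneg (hf x) hε.le)]
      constructor
      · rw [le_div_iff₀ hε]; exact h1
      · rw [div_lt_iff₀ hε]; exact h2
    have hmem : ∀ x : X, ∃ j : Fin n, x ∈ E j := by
      intro x
      have hjlt : ⌊f x / ε⌋₊ < n := by
        rw [Nat.floor_lt (div_nonneg (hf x) hε.le), div_lt_iff₀ hε]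
        exact lt_of_le_of_lt (hfb x) (lt_of_lt_of_le (by linarith) hnb)
      refine ⟨⟨⌊f x / ε⌋₊, hjlt⟩, ?_, ?_⟩
      · show (↑(⌊f x / ε⌋₊) : ℝ) * ε ≤ f x
        rw [← le_div_iff₀ hε]
        exact Nat.floor_le (div_nonneg (hf x) hε.le)
      · show f x < ((⌊f x / ε⌋₊ : ℝ) + 1) * ε
        rw [← div_lt_iff₀ hε]
        exact Nat.lt_floor_add_one _
    have hεn_pos : (0:ℝ) < ε / n := div_pos hε hn0'
    have hV : ∀ i : Fin n, ∃ V ⊇ E i, IsOpen V ∧ μ V < μ (E i) + ENNReal.ofReal (ε / n) :=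
      fun i => Set.exists_isOpen_lt_add _ (measure_ne_top μ _)
        (ENNReal.ofReal_pos.mpr hεn_pos).ne'
    choose V hVE hVopen hVμ using hV
    set U : Fin n → Set X := fun i => V i ∩ f ⁻¹' (Iio (((i:ℕ)+1) * ε)) with hU
    have hUopen : ∀ i, IsOpen (U i) := fun i =>
      (hVopen i).inter (isOpen_Iio.preimage f.continuous)
    have hEU : ∀ i, E i ⊆ U i := fun i x hx => ⟨hVE i hx, hx.2⟩
    have hfU : ∀ i, ∀ x ∈ U i, f x < ((i:ℕ)+1) * ε := fun i x hx => hx.2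
    have hμU : ∀ i, μ (U i) ≤ μ (E i) + ENNReal.ofReal (ε / n) := fun i =>
      (measure_mono inter_subset_left).trans (hVμ i).le
    have hUcover : (univ : Set X) ⊆ ⋃ i, U i := by
      intro x _
      obtain ⟨j, hj⟩ := hmem x
      exact mem_iUnion.mpr ⟨j, hEU j hj⟩
    obtain ⟨pou, hpou⟩ := PartitionOfUnity.exists_isSubordinate isClosed_univ U hUopen hUcover
    have hsum_apply : ∀ x : X, ∑ i, pou i x = 1 := fun x => by
      have := pou.sum_eq_one (mem_univ x)
      rwa [finsum_eq_sum_of_fintype] at this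
    have hfdec : ∑ i : Fin n, ((pou i * f : C(X,ℝ))) = f := by
      ext x
      rw [ContinuousMap.coe_sum, Finset.sum_apply]
      simp only [ContinuousMap.mul_apply]
      rw [← Finset.sum_mul, hsum_apply x, one_mul]
    have hΛ0 : Λ 0 = 0 := by have := hadd 0 0; simpa using this
    have hΛsum : ∀ (g : Fin n → C(X,ℝ)), Λ (∑ i, g i) = ∑ i, Λ (g i) := by
      intro g
      have : ∀ (s : Finset (Fin n)), Λ (∑ i ∈ s, g i) = ∑ i ∈ s, Λ (g i) := by
        intro s
        induction s using Finset.induction with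
        | empty => simpa using hΛ0
        | insert _ _ h ih => rw [Finset.sum_insert h, Finset.sum_insert h, hadd, ih]
      exact this Finset.univ
    have hterm : ∀ i : Fin n,
        Λ (pou i * f) ≤ (((i:ℕ)+1)*ε) * ((μ (E i)).toReal + ε/n) := by
      intro i
      have h1 : Λ (pou i * f) ≤ (((i:ℕ)+1)*ε) * Λ (pou i) := by
        rw [← hsmul]
        refine rMono Λ hadd hpos fun x => ?_
        simp only [ContinuousMap.mul_apply, ContinuousMap.smul_apply, smul_eq_mul]
        by_cases hx : x ∈ tsupport ((pou i : C(X,ℝ)) : X → ℝ)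
        · have hxU : x ∈ U i := hpou i hx
          have hlt := (hfU i x hxU).le
          have h0 := pou.nonneg i x
          nlinarith
        · rw [image_eq_zero_of_notMem_tsupport hx, zero_mul, mul_zero]
      have h2 : Λ (pou i) ≤ (μ (U i)).toReal := by
        have hkey := lam_le_of_tsupport Λ hadd hpos (pou.nonneg i) (pou.le_one i)
          (hUopen i) (hpou i)
        rw [← hμdef] at hkey
        have h0 : 0 ≤ Λ (pou i) := hpos _ (pou.nonneg i)
        have := ENNReal.toReal_mono (measure_ne_top μ _) hkey
        rwa [ENNReal.toReal_ofReal h0] at this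
      have h3 : (μ (U i)).toReal ≤ (μ (E i)).toReal + ε / n := by
        have h4 := ENNReal.toReal_mono
          (by simp [measure_ne_top μ _, ENNReal.ofReal_ne_top, ENNReal.add_ne_top]) (hμU i)
        rwa [ENNReal.toReal_add (measure_ne_top μ _) ENNReal.ofReal_ne_top,
          ENNReal.toReal_ofReal hεn_pos.le] at h4
      calc Λ (pou i * f) ≤ (((i:ℕ)+1)*ε) * Λ (pou i) := h1
        _ ≤ (((i:ℕ)+1)*ε) * ((μ (E i)).toReal + ε/n) := by
            apply mul_le_mul_of_nonneg_left (h2.trans h3) (by positivity)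
    -- sum the bounds
    have hmain : Λ f ≤ ∑ i : Fin n, (((i:ℕ)+1)*ε) * ((μ (E i)).toReal + ε/n) := by
      calc Λ f = Λ (∑ i : Fin n, (pou i * f : C(X,ℝ))) := by rw [hfdec]
        _ = ∑ i : Fin n, Λ (pou i * f) := hΛsum _
        _ ≤ _ := Finset.sum_le_sum fun i _ => hterm i
    -- bound the three pieces
    have hS1 : ∑ i : Fin n, ((i:ℕ) * ε) * (μ (E i)).toReal ≤ ∫ x, f x ∂μ := by
      set g : X → ℝ := fun x => ∑ i : Fin n, (E i).indicator (fun _ => (i:ℕ)*ε) x with hg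
      have hgint : Integrable g μ :=
        integrable_finset_sum _ fun i _ => (integrable_const _).indicator (hEmeas i)
      have hgle : ∀ x, g x ≤ f x := by
        intro x
        obtain ⟨j, hj⟩ := hmem x
        have hgx : g x = (j:ℕ) * ε := by
          simp only [hg]
          rw [Finset.sum_eq_single j]
          · simp [indicator_of_mem hj]
          · intro i _ hij
            apply indicator_of_notMem
            intro hxi
            exact hij (Fin.ext ((hunique x i hxi).trans (hunique x j hj).symm))
          · intro h; exact absurd (Finset.mem_univ j) h
        rw [hgx]; exact hj.1
      have hgeq : ∫ x, g x ∂μ = ∑ i : Fin n, ((i:ℕ) * ε) * (μ (E i)).toReal := by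
        rw [hg, integral_finset_sum _ fun i _ => (integrable_const _).indicator (hEmeas i)]
        congr 1
        ext i
        rw [integral_indicator_const _ (hEmeas i), smul_eq_mul, mul_comm]; rfl
      rw [← hgeq]
      exact integral_mono hgint hintf hgle
    have hS2 : ∑ i : Fin n, (μ (E i)).toReal ≤ c := by
      have hdisj : Pairwise (Function.onFun Disjoint E) := by
        intro i j hij
        rw [Function.onFun, Set.disjoint_left]
        intro x hxi hxj
        exact hij (Fin.ext ((hunique x i hxi).trans (hunique x j hxj).symm))
      have hsum : ∑ i : Fin n, μ (E i) ≤ μ univ := by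
        rw [← tsum_fintype (L := SummationFilter.unconditional (Fin n)), ← measure_iUnion hdisj hEmeas]
        exact measure_mono (subset_univ _)
      have := ENNReal.toReal_mono (measure_ne_top μ _) hsum
      rwa [ENNReal.toReal_sum (fun i _ => measure_ne_top μ _)] at this
    have hS3 : ∑ i : Fin n, (((i:ℕ)+1)*ε) * (ε/n) ≤ (b + 1 + ε) * ε := by
      have hone : ∀ i : Fin n, (((i:ℕ)+1)*ε) * (ε/n) ≤ (n * ε) * (ε / n) := by
        intro i
        apply mul_le_mul_of_nonneg_right _ hεn_pos.le
        apply mul_le_mul_of_nonneg_right _ hε.le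
        exact_mod_cast Nat.succ_le_of_lt i.isLt
      calc ∑ i : Fin n, (((i:ℕ)+1)*ε) * (ε/n) ≤ ∑ _i : Fin n, (n * ε) * (ε / n) :=
            Finset.sum_le_sum fun i _ => hone i
        _ = n * ((n * ε) * (ε / n)) := by
            rw [Finset.sum_const, Finset.card_univ, Fintype.card_fin, nsmul_eq_mul]
        _ = (n * ε) * ε := by field_simp
        _ ≤ (b + 1 + ε) * ε := mul_le_mul_of_nonneg_right hnε hε.le
    have hexpand : ∑ i : Fin n, (((i:ℕ)+1)*ε) * ((μ (E i)).toReal + ε/n)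
        = ∑ i : Fin n, ((i:ℕ) * ε) * (μ (E i)).toReal
          + ε * (∑ i : Fin n, (μ (E i)).toReal)
          + ∑ i : Fin n, (((i:ℕ)+1)*ε) * (ε/n) := by
      rw [Finset.mul_sum, ← Finset.sum_add_distrib, ← Finset.sum_add_distrib]
      congr 1
      ext i
      ring
    have hc0' : 0 ≤ ∑ i : Fin n, (μ (E i)).toReal :=
      Finset.sum_nonneg fun i _ => ENNReal.toReal_nonneg
    have hfinal : ε * (∑ i : Fin n, (μ (E i)).toReal) ≤ ε * c :=
      mul_le_mul_of_nonneg_left hS2 hε.le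
    have : Λ f ≤ (∫ x, f x ∂μ) + ε * c + (b + 1 + ε) * ε := by
      rw [hexpand] at hmain
      linarith
    nlinarith
  refine le_of_forall_pos_le_add fun δ hδ => ?_
  have hCpos : (0:ℝ) < c + b + 2 := by linarith
  set ε : ℝ := min 1 (δ / (c + b + 2)) with hε
  have hεpos : 0 < ε := lt_min one_pos (div_pos hδ hCpos)
  have h1 := H ε hεpos (min_le_left _ _)
  have h2 : ε * (c + b + 2) ≤ δ := by
    have : ε ≤ δ / (c + b + 2) := min_le_right _ _
    calc ε * (c + b + 2) ≤ (δ / (c + b + 2)) * (c + b + 2) :=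
          mul_le_mul_of_nonneg_right this hCpos.le
      _ = δ := div_mul_cancel₀ δ hCpos.ne'
  linarith

include hsmul in
theorem riesz_exists :
    ∃ μ : Measure X, IsFiniteMeasure μ ∧ ∀ f : C(X, ℝ), ∫ x, f x ∂μ = Λ f := by
  refine ⟨rieszMeasure Λ hadd hpos, rieszMeasure_finite Λ hadd hpos, ?_⟩
  set μ := rieszMeasure Λ hadd hpos with hμdef
  haveI : IsFiniteMeasure μ := rieszMeasure_finite Λ hadd hpos
  set c : ℝ := (μ univ).toReal with hc
  have hμ1 : c ≤ Λ 1 := by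
    have h0 : 0 ≤ Λ 1 := hpos 1 fun x => zero_le_one
    have := ENNReal.toReal_mono ENNReal.ofReal_ne_top (rieszMeasure_univ_le Λ hadd hpos)
    rwa [ENNReal.toReal_ofReal h0] at this
  have key : ∀ f : C(X, ℝ), (∀ x, 0 ≤ f x) → ∫ x, f x ∂μ = Λ f := by
    intro f hf
    have hub := lam_le_integral Λ hadd hsmul hpos f hf
    rw [← hμdef] at hub
    set b : ℝ := ‖mkOfCompact f‖ with hb
    have hb0 : 0 ≤ b := norm_nonneg _
    have hfb : ∀ x, f x ≤ b := fun x =>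
      (le_abs_self _).trans (by simpa [hb] using (mkOfCompact f).norm_coe_le_norm x)
    have hg : ∀ x, 0 ≤ (b • (1:C(X,ℝ)) - f) x := by
      intro x
      simp only [ContinuousMap.sub_apply, ContinuousMap.smul_apply, ContinuousMap.one_apply,
        smul_eq_mul, mul_one]
      linarith [hfb x]
    have h2 := lam_le_integral Λ hadd hsmul hpos (b • (1:C(X,ℝ)) - f) hg
    rw [← hμdef] at h2
    have hint0 : Integrable (fun x : X => f x) μ := (mkOfCompact f).integrable μ
    have hint1 : ∫ x, (b • (1:C(X,ℝ)) - f) x ∂μ = b * c - ∫ x, f x ∂μ := by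
      calc ∫ x, (b • (1:C(X,ℝ)) - f) x ∂μ = ∫ x, (b - f x) ∂μ := by
            refine integral_congr_ae (Filter.Eventually.of_forall fun x => ?_)
            simp
        _ = (∫ _x : X, b ∂μ) - ∫ x, f x ∂μ := integral_sub (integrable_const b) hint0
        _ = b * c - ∫ x, f x ∂μ := by rw [integral_const, smul_eq_mul, mul_comm]; rfl
    have hΛsplit : Λ (b • (1:C(X,ℝ)) - f) = b * Λ 1 - Λ f := by
      have h3 : (b • (1:C(X,ℝ)) - f) + f = b • (1:C(X,ℝ)) := by ext x; simp
      have h4 := hadd (b • (1:C(X,ℝ)) - f) f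
      rw [h3, hsmul] at h4
      linarith
    have hlow : ∫ x, f x ∂μ ≤ Λ f := by
      rw [hint1, hΛsplit] at h2
      nlinarith [mul_nonneg hb0 (sub_nonneg.mpr hμ1)]
    exact le_antisymm hlow hub
  intro f
  have hfp : ∀ x, 0 ≤ (f ⊔ 0 : C(X,ℝ)) x := fun x => by
    simp [ContinuousMap.sup_apply, le_sup_right]
  have hfm : ∀ x, 0 ≤ ((-f) ⊔ 0 : C(X,ℝ)) x := fun x => by
    simp [ContinuousMap.sup_apply, le_sup_right]
  have hdec : (f ⊔ 0 : C(X,ℝ)) = f + ((-f) ⊔ 0) := by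
    ext x
    simp only [ContinuousMap.sup_apply, ContinuousMap.add_apply, ContinuousMap.neg_apply,
      ContinuousMap.zero_apply]
    rcases le_total (f x) 0 with h | h
    · rw [sup_eq_right.mpr h, sup_eq_left.mpr (by linarith)]; ring
    · rw [sup_eq_left.mpr h, sup_eq_right.mpr (by linarith)]; ring
  have h5 := hadd f ((-f) ⊔ 0)
  rw [← hdec] at h5
  have hint0 : Integrable (fun x : X => f x) μ := (mkOfCompact f).integrable μ
  have hintm : Integrable (fun x : X => ((-f) ⊔ 0 : C(X,ℝ)) x) μ :=
    (mkOfCompact ((-f) ⊔ 0)).integrable μ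
  have h6 : ∫ x, (f ⊔ 0 : C(X,ℝ)) x ∂μ = ∫ x, f x ∂μ + ∫ x, ((-f) ⊔ 0 : C(X,ℝ)) x ∂μ := by
    calc ∫ x, (f ⊔ 0 : C(X,ℝ)) x ∂μ = ∫ x, (f x + ((-f) ⊔ 0 : C(X,ℝ)) x) ∂μ := by
          refine integral_congr_ae (Filter.Eventually.of_forall fun x => ?_)
          have := congrFun (congrArg (fun g : C(X,ℝ) => (g : X → ℝ)) hdec) x
          simpa using this
      _ = (∫ x, f x ∂μ) + ∫ x, ((-f) ⊔ 0 : C(X,ℝ)) x ∂μ := integral_add hint0 hintm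
  have k1 := key (f ⊔ 0) hfp
  have k2 := key ((-f) ⊔ 0) hfm
  linarith

end RMeasure

end Riesz

section Limit

variable {Y : Type*} [MetricSpace Y] [CompactSpace Y] [MeasurableSpace Y] [BorelSpace Y]

lemma cont_integrable (f : C(Y, ℝ)) (μ : Measure Y) [IsFiniteMeasure μ] :
    Integrable (fun x => f x) μ := (mkOfCompact f).integrable μ

lemma measure_ext_of_integral (μ ν : Measure Y) [IsFiniteMeasure μ] [IsFiniteMeasure ν]
    (h : ∀ f : C(Y, ℝ), ∫ x, f x ∂μ = ∫ x, f x ∂ν) : μ = ν := by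
  apply ext_of_forall_lintegral_eq_of_IsFiniteMeasure
  intro f
  set g : C(Y, ℝ) := ⟨fun x => (f x : ℝ), NNReal.continuous_coe.comp f.continuous⟩ with hg
  have h1 : ∀ (κ : Measure Y) [IsFiniteMeasure κ],
      ∫⁻ x, (f x : ℝ≥0∞) ∂κ = ENNReal.ofReal (∫ x, g x ∂κ) := by
    intro κ hκ
    exact lintegral_coe_eq_integral (fun x => f x) (cont_integrable g κ)
  rw [h1 μ, h1 ν, h g]

lemma exists_limit_measure (U : Ultrafilter ℕ) (μs : ℕ → Measure Y)
    (hfin : ∀ k, IsFiniteMeasure (μs k)) (C : ℝ)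
    (hC : ∀ k, ((μs k) Set.univ).toReal ≤ C) :
    ∃ ν : Measure Y, IsFiniteMeasure ν ∧
      ∀ f : C(Y, ℝ),
        Tendsto (fun k => ∫ x, f x ∂(μs k)) (U : Filter ℕ) (𝓝 (∫ x, f x ∂ν)) := by
  have hC0 : 0 ≤ C := le_trans ENNReal.toReal_nonneg (hC 0)
  have hbound : ∀ (f : C(Y,ℝ)) (k : ℕ),
      (∫ x, f x ∂(μs k)) ∈ Icc (-(‖mkOfCompact f‖ * C)) (‖mkOfCompact f‖ * C) := by
    intro f k
    haveI := hfin k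
    have h1 : ‖∫ x, f x ∂(μs k)‖ ≤ ‖mkOfCompact f‖ * ((μs k) univ).toReal :=
      norm_integral_le_of_norm_le_const (Eventually.of_forall fun x => by
        simpa using (mkOfCompact f).norm_coe_le_norm x)
    have h2 : ‖∫ x, f x ∂(μs k)‖ ≤ ‖mkOfCompact f‖ * C :=
      h1.trans (mul_le_mul_of_nonneg_left (hC k) (norm_nonneg _))
    rw [Real.norm_eq_abs, abs_le] at h2
    exact ⟨h2.1, h2.2⟩
  have hex : ∀ f : C(Y,ℝ), ∃ a : ℝ,
      Tendsto (fun k => ∫ x, f x ∂(μs k)) (U : Filter ℕ) (𝓝 a) := by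
    intro f
    obtain ⟨a, -, ha⟩ :=
      (isCompact_Icc (a := -(‖mkOfCompact f‖ * C)) (b := ‖mkOfCompact f‖ * C)).ultrafilter_le_nhds
        (U.map (fun k => ∫ x, f x ∂(μs k)))
        (by
          rw [Ultrafilter.coe_map, Filter.le_principal_iff, Filter.mem_map]
          exact Filter.univ_mem' (hbound f))
    exact ⟨a, ha⟩
  choose L hL using hex
  have hadd : ∀ f g : C(Y,ℝ), L (f + g) = L f + L g := by
    intro f g
    refine tendsto_nhds_unique (hL (f+g)) ?_
    have heq : (fun k => ∫ x, (f + g) x ∂(μs k))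
        = fun k => (∫ x, f x ∂(μs k)) + ∫ x, g x ∂(μs k) := by
      funext k
      haveI := hfin k
      rw [← integral_add (cont_integrable f _) (cont_integrable g _)]
      refine integral_congr_ae (Eventually.of_forall fun x => ?_)
      simp
    rw [heq]
    exact (hL f).add (hL g)
  have hsmul : ∀ (c : ℝ) (f : C(Y,ℝ)), L (c • f) = c * L f := by
    intro c f
    refine tendsto_nhds_unique (hL (c • f)) ?_
    have heq : (fun k => ∫ x, (c • f) x ∂(μs k)) = fun k => c * ∫ x, f x ∂(μs k) := by
      funext k
      haveI := hfin k
      rw [show c * ∫ x, f x ∂(μs k) = c • ∫ x, f x ∂(μs k) from rfl, ← integral_smul]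
      refine integral_congr_ae (Eventually.of_forall fun x => ?_)
      simp
    rw [heq]
    exact (hL f).const_mul c
  have hpos : ∀ f : C(Y,ℝ), (∀ x, 0 ≤ f x) → 0 ≤ L f := fun f hf =>
    ge_of_tendsto (hL f) (Eventually.of_forall fun k => by
      haveI := hfin k
      exact integral_nonneg fun x => hf x)
  obtain ⟨ν, hν1, hν2⟩ := riesz_exists L hadd hsmul hpos
  exact ⟨ν, hν1, fun f => by rw [hν2 f]; exact hL f⟩

end Limit


/-- An assignment in symmetric form: a family of finite symmetric measures `γ n` on `I^n`
for `N' ≤ n ≤ N`, whose (weighted) first marginals sum to `μ`. -/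
def IsAssignment {I : Type*} [MeasurableSpace I]
    (μ : Measure I) (N' N : ℕ) (γ : ∀ n : ℕ, Measure (Fin n → I)) : Prop :=
  (∀ n ∈ Finset.Icc N' N, IsFiniteMeasure (γ n)) ∧
  (∀ n ∈ Finset.Icc N' N, ∀ σ : Equiv.Perm (Fin n),
      Measure.map (fun x => x ∘ σ) (γ n) = γ n) ∧
  (∀ A : Set I, MeasurableSet A →
      ∑ n ∈ Finset.Icc N' N,
        γ n {x : Fin n → I | ∀ k : Fin n, (k : ℕ) = 0 → x k ∈ A} = μ A)

/-- The total surplus of an assignment: `∑_{n=N'}^N (1/n) ∫_{I^n} s_n dγ_n`. -/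
noncomputable def totalSurplus {I : Type*} [MeasurableSpace I]
    (N' N : ℕ) (s : ∀ n : ℕ, (Fin n → I) → ℝ)
    (γ : ∀ n : ℕ, Measure (Fin n → I)) : ℝ :=
  ∑ n ∈ Finset.Icc N' N, (n : ℝ)⁻¹ * ∫ x, s n x ∂(γ n)

section MainProof
open Topology Filter Set TopologicalSpace BoundedContinuousFunction
open scoped ENNReal NNReal

/-- **Lemma 7 (the maximum is attained).**  There exists an assignment maximizing the
total surplus over all assignments. -/
theorem exists_maximizing_assignment
    {I : Type*} [MetricSpace I] [CompactSpace I] [MeasurableSpace I] [BorelSpace I]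
    (μ : Measure I) [IsFiniteMeasure μ]
    (N' N : ℕ) (hN' : 2 ≤ N') (hNN : N' ≤ N)
    (s : ∀ n : ℕ, (Fin n → I) → ℝ)
    (hs_nonneg : ∀ n ∈ Finset.Icc N' N, ∀ x : Fin n → I, 0 ≤ s n x)
    (hs_cont : ∀ n ∈ Finset.Icc N' N, Continuous (s n))
    (hs_symm : ∀ n ∈ Finset.Icc N' N, ∀ σ : Equiv.Perm (Fin n), ∀ x : Fin n → I,
      s n (x ∘ σ) = s n x) :
    ∃ γ : ∀ n : ℕ, Measure (Fin n → I), IsAssignment μ N' N γ ∧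
      ∀ γ' : ∀ n : ℕ, Measure (Fin n → I), IsAssignment μ N' N γ' →
        totalSurplus N' N s γ' ≤ totalSurplus N' N s γ := by
  classical
  have hpos_n : ∀ n ∈ Finset.Icc N' N, 0 < n := fun n hn => by
    have := (Finset.mem_Icc.mp hn).1; omega
  have hN'Icc : N' ∈ Finset.Icc N' N := Finset.mem_Icc.mpr ⟨le_refl _, hNN⟩
  have hset : ∀ (n : ℕ) (hn : 0 < n) (A : Set I),
      {x : Fin n → I | ∀ k : Fin n, (k : ℕ) = 0 → x k ∈ A}
        = (fun x : Fin n → I => x ⟨0, hn⟩) ⁻¹' A := by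
    intro n hn A
    ext x
    simp only [Set.mem_setOf_eq, Set.mem_preimage]
    constructor
    · intro h; exact h ⟨0, hn⟩ rfl
    · intro h k hk
      have hk' : k = ⟨0, hn⟩ := Fin.ext hk
      rw [hk']; exact h
  have huniv_set : ∀ n : ℕ,
      {x : Fin n → I | ∀ k : Fin n, (k : ℕ) = 0 → x k ∈ (Set.univ : Set I)} = Set.univ := by
    intro n; ext x; simp
  have hmass : ∀ γ' : ∀ n : ℕ, Measure (Fin n → I), IsAssignment μ N' N γ' →
      ∀ n ∈ Finset.Icc N' N, γ' n Set.univ ≤ μ Set.univ := by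
    intro γ' hγ' n hn
    have h := hγ'.2.2 Set.univ MeasurableSet.univ
    calc γ' n Set.univ
        = γ' n {x : Fin n → I | ∀ k : Fin n, (k : ℕ) = 0 → x k ∈ (Set.univ : Set I)} := by
          rw [huniv_set n]
      _ ≤ ∑ m ∈ Finset.Icc N' N,
            γ' m {x : Fin m → I | ∀ k : Fin m, (k : ℕ) = 0 → x k ∈ (Set.univ : Set I)} :=
          Finset.single_le_sum
            (f := fun m => γ' m {x : Fin m → I | ∀ k : Fin m, (k : ℕ) = 0 → x k ∈
              (Set.univ : Set I)}) (fun m _ => zero_le) hn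
      _ = μ Set.univ := h
  -- the base assignment
  set γ₀ : ∀ n : ℕ, Measure (Fin n → I) :=
    fun n => if n = N' then Measure.map (fun (x : I) (_ : Fin n) => x) μ else 0 with hγ₀def
  have hdiagmeas : ∀ n : ℕ, Measurable (fun (x : I) (_ : Fin n) => x) := fun n =>
    measurable_pi_lambda _ fun _ => measurable_id
  have hγ₀ : IsAssignment μ N' N γ₀ := by
    refine ⟨?_, ?_, ?_⟩
    · intro n hn
      simp only [hγ₀def]
      split <;> infer_instance
    · intro n hn σ
      simp only [hγ₀def]
      split
      · have h1 : Measurable (fun x : Fin n → I => x ∘ σ) :=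
          measurable_pi_lambda _ fun i => measurable_pi_apply (σ i)
        rw [Measure.map_map h1 (hdiagmeas n)]
        rfl
      · simp
    · intro A hA
      rw [Finset.sum_eq_single N']
      · have h0 : (0:ℕ) < N' := by omega
        simp only [hγ₀def, if_pos rfl]
        rw [hset N' h0 A, Measure.map_apply (hdiagmeas N') ((measurable_pi_apply _) hA)]
        congr 1
      · intro m hm hne
        simp [hγ₀def, if_neg hne]
      · intro h; exact absurd hN'Icc h
  -- uniform bounds on the surplus functions
  have hMex : ∀ n : ℕ, ∃ M : ℝ, 0 ≤ M ∧ (n ∈ Finset.Icc N' N → ∀ x, s n x ≤ M) := by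
    intro n
    by_cases hn : n ∈ Finset.Icc N' N
    · refine ⟨‖mkOfCompact (⟨s n, hs_cont n hn⟩ : C(Fin n → I, ℝ))‖, norm_nonneg _,
        fun _ x => ?_⟩
      exact (le_abs_self _).trans (by
        simpa using (mkOfCompact (⟨s n, hs_cont n hn⟩ : C(Fin n → I, ℝ))).norm_coe_le_norm x)
    · exact ⟨0, le_refl 0, fun h => absurd h hn⟩
  choose M hM0 hM using hMex
  -- upper bound for the total surplus of any assignment
  set B : ℝ := ∑ n ∈ Finset.Icc N' N, (n : ℝ)⁻¹ * (M n * (μ Set.univ).toReal) with hB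
  have hbound : ∀ γ' : ∀ n : ℕ, Measure (Fin n → I), IsAssignment μ N' N γ' →
      totalSurplus N' N s γ' ≤ B := by
    intro γ' hγ'
    rw [totalSurplus, hB]
    refine Finset.sum_le_sum fun n hn => ?_
    haveI := hγ'.1 n hn
    have hint : Integrable (s n) (γ' n) :=
      (mkOfCompact (⟨s n, hs_cont n hn⟩ : C(Fin n → I, ℝ))).integrable _
    have h1 : ∫ x, s n x ∂(γ' n) ≤ M n * ((γ' n) Set.univ).toReal := by
      calc ∫ x, s n x ∂(γ' n) ≤ ∫ _x, M n ∂(γ' n) :=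
            integral_mono hint (integrable_const _) (hM n hn)
        _ = M n * ((γ' n) Set.univ).toReal := by rw [integral_const, smul_eq_mul, mul_comm]; rfl
    have h2 : ((γ' n) Set.univ).toReal ≤ (μ Set.univ).toReal :=
      ENNReal.toReal_mono (measure_ne_top μ _) (hmass γ' hγ' n hn)
    have h3 : ∫ x, s n x ∂(γ' n) ≤ M n * (μ Set.univ).toReal :=
      h1.trans (mul_le_mul_of_nonneg_left h2 (hM0 n))
    exact mul_le_mul_of_nonneg_left h3 (by positivity)
  -- the supremum
  set T : Set ℝ := {r | ∃ γ', IsAssignment μ N' N γ' ∧ totalSurplus N' N s γ' = r} with hT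
  have hTne : T.Nonempty := ⟨totalSurplus N' N s γ₀, γ₀, hγ₀, rfl⟩
  have hTbdd : BddAbove T := ⟨B, by rintro r ⟨γ', hγ', rfl⟩; exact hbound γ' hγ'⟩
  set m : ℝ := sSup T with hm
  -- maximizing sequence
  have hseq : ∀ k : ℕ, ∃ γ', IsAssignment μ N' N γ' ∧
      m - 1 / ((k : ℝ) + 1) < totalSurplus N' N s γ' := by
    intro k
    have hlt : m - 1 / ((k : ℝ) + 1) < m := by
      have : (0:ℝ) < 1 / ((k : ℝ) + 1) := by positivity
      linarith
    obtain ⟨r, hrT, hr⟩ := exists_lt_of_lt_csSup hTne hlt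
    obtain ⟨γ', hγ', rfl⟩ := hrT
    exact ⟨γ', hγ', hr⟩
  choose γseq hγseq hγval using hseq
  have hle_m : ∀ k, totalSurplus N' N s (γseq k) ≤ m := fun k =>
    le_csSup hTbdd ⟨γseq k, hγseq k, rfl⟩
  have htend : Tendsto (fun k => totalSurplus N' N s (γseq k)) atTop (𝓝 m) := by
    have h1 : Tendsto (fun k : ℕ => m - 1 / ((k : ℝ) + 1)) atTop (𝓝 m) := by
      have h1 := tendsto_one_div_add_atTop_nhds_zero_nat (𝕜 := ℝ)
      have h2 : Tendsto (fun _ : ℕ => m) atTop (𝓝 m) := tendsto_const_nhds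
      simpa using h2.sub h1
    exact tendsto_of_tendsto_of_tendsto_of_le_of_le h1 tendsto_const_nhds
      (fun k => (hγval k).le) hle_m
  -- ultrafilter
  set U : Ultrafilter ℕ := Ultrafilter.of atTop with hUdef
  have hU : (U : Filter ℕ) ≤ atTop := Ultrafilter.of_le _
  -- limit measures
  have hνex : ∀ n : ℕ, ∃ ν : Measure (Fin n → I), IsFiniteMeasure ν ∧
      (n ∈ Finset.Icc N' N → ∀ f : C(Fin n → I, ℝ),
        Tendsto (fun k => ∫ x, f x ∂(γseq k n)) (U : Filter ℕ) (𝓝 (∫ x, f x ∂ν))) := by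
    intro n
    by_cases hn : n ∈ Finset.Icc N' N
    · obtain ⟨ν, h1, h2⟩ := exists_limit_measure U (fun k => γseq k n)
        (fun k => (hγseq k).1 n hn) ((μ Set.univ).toReal)
        (fun k => ENNReal.toReal_mono (measure_ne_top μ _) (hmass _ (hγseq k) n hn))
      exact ⟨ν, h1, fun _ => h2⟩
    · exact ⟨0, inferInstance, fun h => absurd h hn⟩
  choose γlim hγlimfin hγlimtend using hνex
  haveI : ∀ n, IsFiniteMeasure (γlim n) := hγlimfin
  -- convergence of total surpluses along U
  have hsurtend : Tendsto (fun k => totalSurplus N' N s (γseq k)) (U : Filter ℕ)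
      (𝓝 (totalSurplus N' N s γlim)) := by
    rw [show totalSurplus N' N s γlim
        = ∑ n ∈ Finset.Icc N' N, (n : ℝ)⁻¹ * ∫ x, s n x ∂(γlim n) from rfl]
    refine tendsto_finset_sum _ fun n hn => ?_
    exact ((hγlimtend n hn (⟨s n, hs_cont n hn⟩ : C(Fin n → I, ℝ))).const_mul _)
  have hmeq : totalSurplus N' N s γlim = m :=
    tendsto_nhds_unique hsurtend (htend.mono_left hU)
  -- γlim is an assignment
  have hlim_assign : IsAssignment μ N' N γlim := by
    refine ⟨fun n _ => hγlimfin n, ?_, ?_⟩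
    · -- symmetry
      intro n hn σ
      have hσmeas : Measurable (fun x : Fin n → I => x ∘ σ) :=
        measurable_pi_lambda _ fun i => measurable_pi_apply (σ i)
      have hσcont : Continuous (fun x : Fin n → I => x ∘ σ) :=
        continuous_pi fun i => continuous_apply (σ i)
      haveI : IsFiniteMeasure (Measure.map (fun x : Fin n → I => x ∘ σ) (γlim n)) :=
        inferInstance
      apply measure_ext_of_integral
      intro f
      set fσ : C(Fin n → I, ℝ) := f.comp ⟨_, hσcont⟩ with hfσ
      have hL : ∫ x, f x ∂(Measure.map (fun x : Fin n → I => x ∘ σ) (γlim n))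
          = ∫ x, fσ x ∂(γlim n) := by
        rw [integral_map hσmeas.aemeasurable f.continuous.aestronglyMeasurable]
        rfl
      rw [hL]
      refine tendsto_nhds_unique (hγlimtend n hn fσ) ?_
      have heq : ∀ k, ∫ x, fσ x ∂(γseq k n) = ∫ x, f x ∂(γseq k n) := by
        intro k
        haveI := (hγseq k).1 n hn
        have h1 : ∫ x, fσ x ∂(γseq k n)
            = ∫ x, f x ∂(Measure.map (fun x : Fin n → I => x ∘ σ) (γseq k n)) := by
          rw [integral_map hσmeas.aemeasurable f.continuous.aestronglyMeasurable]
          rfl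
        rw [h1, (hγseq k).2.1 n hn σ]
      simp only [heq]
      exact hγlimtend n hn f
    · -- marginals
      intro A hA
      rcases isEmpty_or_nonempty I with hI | hI
      · have hμ0 : μ = 0 := Measure.eq_zero_of_isEmpty μ
        have hz : ∀ n ∈ Finset.Icc N' N, γlim n
            {x : Fin n → I | ∀ k : Fin n, (k : ℕ) = 0 → x k ∈ A} = 0 := by
          intro n hn
          haveI : IsEmpty (Fin n → I) := ⟨fun x => hI.false (x ⟨0, hpos_n n hn⟩)⟩
          rw [Measure.eq_zero_of_isEmpty (γlim n)]
          rfl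
        rw [Finset.sum_congr rfl hz, hμ0]
        simp
      · -- the projection maps
        set π : ∀ n : ℕ, (Fin n → I) → I :=
          fun n x => if h : 0 < n then x ⟨0, h⟩ else Classical.arbitrary I with hπ
        have hπmeas : ∀ n, Measurable (π n) := by
          intro n
          by_cases h : 0 < n
          · simpa [hπ, dif_pos h] using measurable_pi_apply (⟨0, h⟩ : Fin n)
          · simpa [hπ, dif_neg h] using measurable_const
        have hπcont : ∀ n, Continuous (π n) := by
          intro n
          by_cases h : 0 < n
          · simpa [hπ, dif_pos h] using continuous_apply (⟨0, h⟩ : Fin n)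
          · simpa [hπ, dif_neg h] using continuous_const
        have hπpre : ∀ (n : ℕ), n ∈ Finset.Icc N' N → ∀ (B' : Set I),
            (π n) ⁻¹' B' = {x : Fin n → I | ∀ k : Fin n, (k : ℕ) = 0 → x k ∈ B'} := by
          intro n hn B'
          have h0 : 0 < n := hpos_n n hn
          rw [hset n h0 B']
          ext x
          simp [hπ, dif_pos h0]
        -- measure identity along the sequence
        have hρk : ∀ k, (∑ n ∈ Finset.Icc N' N, Measure.map (π n) (γseq k n)) = μ := by
          intro k
          ext A' hA'
          rw [Measure.finset_sum_apply]
          calc ∑ n ∈ Finset.Icc N' N, (Measure.map (π n) (γseq k n)) A'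
              = ∑ n ∈ Finset.Icc N' N,
                  γseq k n {x : Fin n → I | ∀ j : Fin n, (j : ℕ) = 0 → x j ∈ A'} := by
                refine Finset.sum_congr rfl fun n hn => ?_
                rw [Measure.map_apply (hπmeas n) hA', hπpre n hn A']
            _ = μ A' := (hγseq k).2.2 A' hA'
        -- the limit measure identity
        have hρ : (∑ n ∈ Finset.Icc N' N, Measure.map (π n) (γlim n)) = μ := by
          apply measure_ext_of_integral
          intro f
          have hint : ∀ n ∈ Finset.Icc N' N,
              Integrable (fun y => f y) (Measure.map (π n) (γlim n)) :=
            fun n hn => cont_integrable f _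
          rw [integral_finset_sum_measure hint]
          have hterm : ∀ n ∈ Finset.Icc N' N,
              ∫ y, f y ∂(Measure.map (π n) (γlim n))
                = ∫ x, (f.comp ⟨π n, hπcont n⟩) x ∂(γlim n) := by
            intro n hn
            rw [integral_map (hπmeas n).aemeasurable f.continuous.aestronglyMeasurable]
            rfl
          rw [Finset.sum_congr rfl hterm]
          have htendsum : Tendsto
              (fun k => ∑ n ∈ Finset.Icc N' N, ∫ x, (f.comp ⟨π n, hπcont n⟩) x ∂(γseq k n))
              (U : Filter ℕ)
              (𝓝 (∑ n ∈ Finset.Icc N' N, ∫ x, (f.comp ⟨π n, hπcont n⟩) x ∂(γlim n))) :=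
            tendsto_finset_sum _ fun n hn => hγlimtend n hn _
          have hconst : ∀ k,
              ∑ n ∈ Finset.Icc N' N, ∫ x, (f.comp ⟨π n, hπcont n⟩) x ∂(γseq k n)
                = ∫ y, f y ∂μ := by
            intro k
            rw [← hρk k]
            rw [integral_finset_sum_measure (fun n hn => by
              haveI := (hγseq k).1 n hn
              exact cont_integrable f _)]
            refine Finset.sum_congr rfl fun n hn => ?_
            haveI := (hγseq k).1 n hn
            rw [integral_map (hπmeas n).aemeasurable f.continuous.aestronglyMeasurable]
            rfl
          have : Tendsto
              (fun _k : ℕ => ∫ y, f y ∂μ) (U : Filter ℕ) (𝓝 (∫ y, f y ∂μ)) :=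
            tendsto_const_nhds
          rw [show (fun k => ∑ n ∈ Finset.Icc N' N,
              ∫ x, (f.comp ⟨π n, hπcont n⟩) x ∂(γseq k n)) = fun _k => ∫ y, f y ∂μ from
            funext hconst] at htendsum
          exact tendsto_nhds_unique htendsum this
        calc ∑ n ∈ Finset.Icc N' N,
            γlim n {x : Fin n → I | ∀ k : Fin n, (k : ℕ) = 0 → x k ∈ A}
            = ∑ n ∈ Finset.Icc N' N, (Measure.map (π n) (γlim n)) A := by
              refine Finset.sum_congr rfl fun n hn => ?_
              rw [Measure.map_apply (hπmeas n) hA, hπpre n hn A]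
          _ = (∑ n ∈ Finset.Icc N' N, Measure.map (π n) (γlim n)) A :=
              (Measure.finset_sum_apply _ _ _).symm
          _ = μ A := by rw [hρ]
  refine ⟨γlim, hlim_assign, fun γ' hγ' => ?_⟩
  rw [hmeq]
  exact le_csSup hTbdd ⟨γ', hγ', rfl⟩

end MainProof
end

section
/- If S : I^m → ℝ is symmetric, then the supremum of ∫_{I^m} S dγ̂ over all γ̂ ∈ Γ_sym equals the supremum of ∫_{I^m} S dγ̂ over all γ̂ ∈ Γ (without the symmetry restriction). -/
open MeasureTheory
open scoped ENNReal NNReal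

lemma map_finset_sum' {α β ι : Type*} [MeasurableSpace α] [MeasurableSpace β]
    (s : Finset ι) (μ : ι → Measure α) {f : α → β} (hf : Measurable f) :
    Measure.map f (∑ i ∈ s, μ i) = ∑ i ∈ s, Measure.map f (μ i) := by
  simp_rw [← Measure.mapₗ_apply_of_measurable hf]
  exact map_sum _ _ _

/-- `Γ`: the set of finite measures on `I^m` all of whose one-dimensional marginals
equal `μ`. -/
def Gamma {I : Type*} [MeasurableSpace I] (μ : Measure I) (m : ℕ) :
    Set (Measure (Fin m → I)) :=
  {γ | IsFiniteMeasure γ ∧ (∀ i : Fin m, Measure.map (fun x => x i) γ = μ)}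

/-- `Γ_sym`: the subset of `Γ` of measures invariant under every coordinate
permutation. -/
def GammaSym {I : Type*} [MeasurableSpace I] (μ : Measure I) (m : ℕ) :
    Set (Measure (Fin m → I)) :=
  {γ | IsFiniteMeasure γ ∧
    (∀ σ : Equiv.Perm (Fin m), Measure.map (fun x => x ∘ σ) γ = γ) ∧
    (∀ i : Fin m, Measure.map (fun x => x i) γ = μ)}

/-- **Lemma (symmetrization).**  For a symmetric cost `S`, the symmetric transport
problem has the same value as the unrestricted one. -/
theorem sup_symmetric_eq_sup
    {I : Type*} [TopologicalSpace I] [PolishSpace I] [MeasurableSpace I] [BorelSpace I]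
    (μ : Measure I) [IsFiniteMeasure μ]
    (m : ℕ) (hm : 2 ≤ m)
    (S : (Fin m → I) → ℝ)
    (hS_symm : ∀ σ : Equiv.Perm (Fin m), ∀ x, S (x ∘ σ) = S x)
    (hS_usc : UpperSemicontinuous S)
    (ahat : I → ℝ) (hahat_lsc : LowerSemicontinuous ahat) (hahat_int : Integrable ahat μ)
    (hS_bound : ∀ x : Fin m → I, S x ≤ ∑ k, ahat (x k)) :
    sSup {r : ℝ | ∃ γ ∈ GammaSym μ m, r = ∫ x, S x ∂γ}
      = sSup {r : ℝ | ∃ γ ∈ Gamma μ m, r = ∫ x, S x ∂γ} := by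
  have hPmeas : ∀ σ : Equiv.Perm (Fin m), Measurable (fun x : Fin m → I => x ∘ σ) :=
    fun σ => measurable_pi_lambda _ fun i => measurable_pi_apply (σ i)
  have hSmeas : Measurable S := hS_usc.measurable
  have hcard : Fintype.card (Equiv.Perm (Fin m)) = m.factorial := by
    rw [Fintype.card_perm, Fintype.card_fin]
  have hfact0 : (m.factorial : ℝ≥0∞) ≠ 0 := by
    exact_mod_cast Nat.cast_ne_zero.mpr m.factorial_ne_zero
  have hfacttop : (m.factorial : ℝ≥0∞) ≠ ⊤ := ENNReal.natCast_ne_top _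
  congr 1
  apply Set.Subset.antisymm
  · rintro r ⟨γ, ⟨h1, h2, h3⟩, rfl⟩
    exact ⟨γ, ⟨h1, h3⟩, rfl⟩
  · rintro r ⟨γ, ⟨h1, h2⟩, rfl⟩
    set c : ℝ≥0∞ := ((m.factorial : ℝ≥0∞))⁻¹ with hc
    set γhat : Measure (Fin m → I) :=
      c • ∑ σ : Equiv.Perm (Fin m), Measure.map (fun x => x ∘ σ) γ with hγhat
    have huniv : ∀ σ : Equiv.Perm (Fin m),
        (Measure.map (fun x : Fin m → I => x ∘ σ) γ) Set.univ = γ Set.univ := fun σ => by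
      rw [Measure.map_apply (hPmeas σ) MeasurableSet.univ, Set.preimage_univ]
    have hcne : c ≠ ⊤ := by simp [hc, hfact0]
    have hcomp : ∀ σ : Equiv.Perm (Fin m), S ∘ (fun x : Fin m → I => x ∘ σ) = S :=
      fun σ => funext fun x => hS_symm σ x
    have hint_iff : ∀ σ : Equiv.Perm (Fin m),
        Integrable S (Measure.map (fun x => x ∘ σ) γ) ↔ Integrable S γ := fun σ => by
      rw [integrable_map_measure hSmeas.aestronglyMeasurable (hPmeas σ).aemeasurable, hcomp σ]
    have hintmap : ∀ σ : Equiv.Perm (Fin m),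
        ∫ x, S x ∂(Measure.map (fun x => x ∘ σ) γ) = ∫ x, S x ∂γ := fun σ => by
      rw [integral_map (hPmeas σ).aemeasurable hSmeas.aestronglyMeasurable]
      simp only [hS_symm]
    have hctr : c.toReal = (m.factorial : ℝ)⁻¹ := by
      rw [hc, ENNReal.toReal_inv]; simp
    have hintegral : ∫ x, S x ∂γhat = ∫ x, S x ∂γ := by
      rw [hγhat, integral_smul_measure]
      by_cases hI : Integrable S γ
      · rw [integral_finset_sum_measure (fun σ _ => (hint_iff σ).mpr hI)]
        simp only [hintmap, Finset.sum_const, Finset.card_univ, hcard, hctr,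
          nsmul_eq_mul, smul_eq_mul]
        rw [← mul_assoc, inv_mul_cancel₀ (by exact_mod_cast m.factorial_ne_zero), one_mul]
      · have hI2 : ¬ Integrable S (∑ σ : Equiv.Perm (Fin m), Measure.map (fun x => x ∘ σ) γ) := by
          intro h
          apply hI
          have hle : Measure.map (fun x : Fin m → I => x ∘ (1 : Equiv.Perm (Fin m))) γ
              ≤ ∑ σ : Equiv.Perm (Fin m), Measure.map (fun x => x ∘ σ) γ :=
            Measure.le_iff'.mpr fun s => by
              rw [Measure.coe_finset_sum, Finset.sum_apply]
              exact Finset.single_le_sum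
                (f := fun σ : Equiv.Perm (Fin m) =>
                  Measure.map (fun x : Fin m → I => x ∘ σ) γ s)
                (fun _ _ => zero_le) (Finset.mem_univ 1)
          have h2' := h.mono_measure hle
          rwa [show (fun x : Fin m → I => x ∘ (1 : Equiv.Perm (Fin m))) = id from rfl,
            Measure.map_id] at h2'
        rw [integral_undef hI, integral_undef hI2, smul_zero]
    refine ⟨γhat, ⟨?_, ?_, ?_⟩, hintegral.symm⟩
    · constructor
      rw [hγhat]
      simp only [Measure.smul_apply, Measure.coe_finset_sum, Finset.sum_apply, huniv,
        Finset.sum_const, Finset.card_univ, hcard, smul_eq_mul, nsmul_eq_mul]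
      exact ENNReal.mul_lt_top hcne.lt_top
        (ENNReal.mul_lt_top hfacttop.lt_top (measure_lt_top γ _))
    · intro τ
      rw [hγhat, Measure.map_smul, map_finset_sum' _ _ (hPmeas τ)]
      congr 1
      have hmm : ∀ σ : Equiv.Perm (Fin m),
          Measure.map (fun x : Fin m → I => x ∘ τ) (Measure.map (fun x => x ∘ σ) γ)
            = Measure.map (fun x : Fin m → I => x ∘ (σ * τ : Equiv.Perm (Fin m))) γ := by
        intro σ
        rw [Measure.map_map (hPmeas τ) (hPmeas σ)]
        congr 1
      simp only [hmm]
      exact Equiv.sum_comp (Equiv.mulRight τ)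
        (fun σ : Equiv.Perm (Fin m) => Measure.map (fun x : Fin m → I => x ∘ σ) γ)
    · intro i
      rw [hγhat, Measure.map_smul, map_finset_sum' _ _ (measurable_pi_apply i)]
      have hmm : ∀ σ : Equiv.Perm (Fin m),
          Measure.map (fun x : Fin m → I => x i) (Measure.map (fun x => x ∘ σ) γ) = μ := by
        intro σ
        rw [Measure.map_map (measurable_pi_apply i) (hPmeas σ)]
        exact h2 (σ i)
      simp only [hmm, Finset.sum_const, Finset.card_univ, hcard]
      rw [← Nat.cast_smul_eq_nsmul ℝ≥0∞, smul_smul, hc,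
        ENNReal.inv_mul_cancel hfact0 hfacttop, one_smul]
end
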